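/- arXiv:2504.03134 — 7 statements merged into one kernel-verified Lean document; each statement's English description precedes it below -/
import Mathlib

section
/- Let 0 < δ ≤ 1/4, let g be an invertible real n×n matrix, let p be a complex n×n matrix with ‖p − I‖ < δ in operator norm, set h = g·p and B = h·hᵀ. Then B is a complex symmetric matrix and, writing B = B₀ + iB₁ with B₀ = Re B and B₁ = Im B (entrywise real and imaginary parts), both matrices 3δ·B₀ − B₁ and 3δ·B₀ + B₁ are positive definite; equivalently, for every nonzero x ∈ ℝ^n one has Re⟨Bx,x⟩ > 0 and |Im⟨Bx,x⟩| ≤ 3δ·Re⟨Bx,x⟩. -/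
open scoped Matrix.Norms.L2Operator Matrix

/-- The entrywise real part of a complex matrix. -/
def matRe {n : ℕ} (B : Matrix (Fin n) (Fin n) ℂ) : Matrix (Fin n) (Fin n) ℝ :=
  B.map Complex.re

/-- The entrywise imaginary part of a complex matrix. -/
def matIm {n : ℕ} (B : Matrix (Fin n) (Fin n) ℂ) : Matrix (Fin n) (Fin n) ℝ :=
  B.map Complex.im

lemma scalar_key (δ A C Y R : ℝ) (hδ0 : 0 < δ) (hδ1 : δ ≤ 1/4) (hY : 0 < Y)
    (hA0 : 0 ≤ A) (hC0 : 0 ≤ C) (hR0 : 0 ≤ R)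
    (hC : C < δ * Y) (hR : R < δ * Y) (hA : Y - R ≤ A) :
    C^2 < A^2 ∧ 2*(A*C) < 3*δ*(A^2 - C^2) := by
  have hApos : (1-δ)*Y < A := by nlinarith
  have h1 : 0 < δ*A - (1-δ)*C := by nlinarith
  have h2 : 0 < 3*δ*A + (1-3*δ)*C := by nlinarith
  have hAC : 0 < A - C := by nlinarith
  constructor
  · nlinarith [mul_pos hAC (show (0:ℝ) < A + C by nlinarith)]
  · nlinarith [mul_pos h1 h2, mul_nonneg (show (0:ℝ) ≤ 1 - 4*δ by linarith) (sq_nonneg C)]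

lemma quad_key (δ Y2 R2 B2 A2 YR AB : ℝ) (hδ0 : 0 < δ) (hδ1 : δ ≤ 1/4)
    (hY2pos : 0 < Y2) (hR2 : 0 ≤ R2) (hB2 : 0 ≤ B2) (hA2 : 0 ≤ A2)
    (hYRcs : YR^2 ≤ Y2 * R2) (hABcs : AB^2 ≤ A2 * B2)
    (hA2eq : A2 = Y2 + 2*YR + R2) (hRB : R2 + B2 < δ^2 * Y2) :
    0 < A2 - B2 ∧ |2 * AB| < 3*δ*(A2 - B2) := by
  set Y := Real.sqrt Y2 with hYd
  set A := Real.sqrt A2 with hAd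
  set C := Real.sqrt B2 with hCd
  set R := Real.sqrt R2 with hRd
  have hYsq : Y^2 = Y2 := Real.sq_sqrt hY2pos.le
  have hAsq : A^2 = A2 := Real.sq_sqrt hA2
  have hCsq : C^2 = B2 := Real.sq_sqrt hB2
  have hRsq : R^2 = R2 := Real.sq_sqrt hR2
  have hYpos : 0 < Y := Real.sqrt_pos.2 hY2pos
  have hAnn : 0 ≤ A := Real.sqrt_nonneg _
  have hCnn : 0 ≤ C := Real.sqrt_nonneg _
  have hRnn : 0 ≤ R := Real.sqrt_nonneg _
  have hCY : C < δ * Y := by nlinarith [mul_pos hδ0 hYpos]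
  have hRY : R < δ * Y := by nlinarith [mul_pos hδ0 hYpos]
  have hYRA : Y - R ≤ A := by
    have h1 : (Y - R)^2 ≤ A2 := by
      nlinarith [mul_nonneg hYpos.le hRnn, sq_nonneg (Y*R + YR)]
    calc Y - R ≤ |Y - R| := le_abs_self _
      _ = Real.sqrt ((Y-R)^2) := (Real.sqrt_sq_eq_abs _).symm
      _ ≤ A := by rw [hAd]; exact Real.sqrt_le_sqrt h1
  obtain ⟨hg1, hg2⟩ := scalar_key δ A C Y R hδ0 hδ1 hYpos hAnn hCnn hRnn hCY hRY hYRA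
  have hABle : |AB| ≤ A * C := by
    calc |AB| = Real.sqrt (AB^2) := (Real.sqrt_sq_eq_abs _).symm
      _ ≤ Real.sqrt (A2 * B2) := Real.sqrt_le_sqrt hABcs
      _ = A * C := by rw [hAd, hCd, Real.sqrt_mul hA2]
  constructor
  · nlinarith
  · calc |2 * AB| = 2 * |AB| := by rw [abs_mul]; norm_num
      _ ≤ 2 * (A * C) := by linarith
      _ < 3*δ*(A^2 - C^2) := hg2
      _ = 3*δ*(A2 - B2) := by rw [hAsq, hCsq]

lemma sum_sq_mulVec_le {n : ℕ} (M : Matrix (Fin n) (Fin n) ℂ) (v : Fin n → ℂ) :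
    ∑ j, ‖(M *ᵥ v) j‖^2 ≤ ‖M‖^2 * ∑ j, ‖v j‖^2 := by
  have h : √(∑ j, ‖(M *ᵥ v) j‖^2) ≤ ‖M‖ * √(∑ j, ‖v j‖^2) := by
    have h0 := M.l2_opNorm_mulVec ((WithLp.equiv 2 (Fin n → ℂ)).symm v)
    rw [EuclideanSpace.norm_eq, EuclideanSpace.norm_eq] at h0
    exact h0
  have h1 : 0 ≤ ∑ j, ‖(M *ᵥ v) j‖^2 := Finset.sum_nonneg fun _ _ => sq_nonneg _
  have h2 : 0 ≤ ∑ j, ‖v j‖^2 := Finset.sum_nonneg fun _ _ => sq_nonneg _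
  nlinarith [Real.sq_sqrt h1, Real.sq_sqrt h2, Real.sqrt_nonneg (∑ j, ‖(M *ᵥ v) j‖^2),
    Real.sqrt_nonneg (∑ j, ‖v j‖^2), norm_nonneg M, h]

lemma sum_sq_transpose_mulVec_le {n : ℕ} (M : Matrix (Fin n) (Fin n) ℂ) (v : Fin n → ℂ) :
    ∑ j, ‖(Mᵀ *ᵥ v) j‖^2 ≤ ‖M‖^2 * ∑ j, ‖v j‖^2 := by
  have key : ∀ j, (Mᵀ *ᵥ v) j = star ((Mᴴ *ᵥ star v) j) := by
    intro j
    simp [Matrix.mulVec, dotProduct, Matrix.conjTranspose_apply, star_sum, mul_comm]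
  calc ∑ j, ‖(Mᵀ *ᵥ v) j‖^2 = ∑ j, ‖(Mᴴ *ᵥ star v) j‖^2 := by
        simp_rw [key, norm_star]
    _ ≤ ‖Mᴴ‖^2 * ∑ j, ‖(star v) j‖^2 := sum_sq_mulVec_le _ _
    _ = ‖M‖^2 * ∑ j, ‖v j‖^2 := by
        rw [Matrix.l2_opNorm_conjTranspose]
        simp [norm_star]

lemma vec_key {n : ℕ} (δ : ℝ) (hδ0 : 0 < δ) (hδ1 : δ ≤ 1/4)
    (q : Matrix (Fin n) (Fin n) ℂ) (y : Fin n → ℝ) (hy : y ≠ 0)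
    (hw : ∑ j, ‖((q - 1) *ᵥ fun k => (y k : ℂ)) j‖^2 < δ^2 * ∑ j, (y j)^2) :
    0 < ((q *ᵥ fun k => (y k : ℂ)) ⬝ᵥ (q *ᵥ fun k => (y k : ℂ))).re ∧
    |((q *ᵥ fun k => (y k : ℂ)) ⬝ᵥ (q *ᵥ fun k => (y k : ℂ))).im| <
      3*δ*((q *ᵥ fun k => (y k : ℂ)) ⬝ᵥ (q *ᵥ fun k => (y k : ℂ))).re := by
  classical
  set cy : Fin n → ℂ := fun k => (y k : ℂ) with hcy
  set w : Fin n → ℂ := (q - 1) *ᵥ cy with hwdef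
  set z : Fin n → ℂ := q *ᵥ cy with hzdef
  have hz : ∀ j, z j = (y j : ℂ) + w j := by
    have hq : q *ᵥ cy = (q - 1) *ᵥ cy + 1 *ᵥ cy := by
      rw [← Matrix.add_mulVec, sub_add_cancel]
    intro j
    rw [hzdef, hq, Matrix.one_mulVec]
    simp [hwdef, add_comm, hcy]
  have hzre : ∀ j, (z j).re = y j + (w j).re := by intro j; rw [hz j]; simp
  have hzim : ∀ j, (z j).im = (w j).im := by intro j; rw [hz j]; simp
  have hwsum : ∑ j, ‖w j‖^2 = (∑ j, ((w j).re)^2) + ∑ j, ((z j).im)^2 := by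
    rw [← Finset.sum_add_distrib]
    refine Finset.sum_congr rfl fun j _ => ?_
    rw [Complex.sq_norm, Complex.normSq_apply, hzim j]; ring
  have hY2pos : 0 < ∑ j, (y j)^2 := by
    have hex : ∃ j, y j ≠ 0 := by
      by_contra hcon
      push_neg at hcon
      exact hy (funext hcon)
    obtain ⟨j, hj⟩ := hex
    refine Finset.sum_pos' (fun i _ => sq_nonneg _) ⟨j, Finset.mem_univ j, ?_⟩
    positivity
  have hA2eq : (∑ j, ((z j).re)^2) =
      (∑ j, (y j)^2) + 2*(∑ j, y j * (w j).re) + ∑ j, ((w j).re)^2 := by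
    have he : ∀ j : Fin n, (z j).re ^ 2 = y j ^ 2 + 2 * (y j * (w j).re) + (w j).re ^ 2 := by
      intro j; rw [hzre j]; ring
    rw [Finset.sum_congr rfl (fun j _ => he j), Finset.sum_add_distrib,
      Finset.sum_add_distrib, Finset.mul_sum]
  obtain ⟨hg1, hg2⟩ := quad_key δ (∑ j, (y j)^2) (∑ j, ((w j).re)^2) (∑ j, ((z j).im)^2)
    (∑ j, ((z j).re)^2) (∑ j, y j * (w j).re) (∑ j, (z j).re * (z j).im) hδ0 hδ1 hY2pos
    (Finset.sum_nonneg fun _ _ => sq_nonneg _) (Finset.sum_nonneg fun _ _ => sq_nonneg _)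
    (Finset.sum_nonneg fun _ _ => sq_nonneg _)
    (Finset.sum_mul_sq_le_sq_mul_sq Finset.univ y (fun j => (w j).re))
    (Finset.sum_mul_sq_le_sq_mul_sq Finset.univ (fun j => (z j).re) (fun j => (z j).im))
    hA2eq (by rw [← hwsum]; exact hw)
  have hre : (z ⬝ᵥ z).re = (∑ j, ((z j).re)^2) - ∑ j, ((z j).im)^2 := by
    rw [dotProduct, Complex.re_sum, ← Finset.sum_sub_distrib]
    refine Finset.sum_congr rfl fun j _ => ?_
    rw [Complex.mul_re]; ring
  have him : (z ⬝ᵥ z).im = 2 * ∑ j, (z j).re * (z j).im := by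
    rw [dotProduct, Complex.im_sum, Finset.mul_sum]
    refine Finset.sum_congr rfl fun j _ => ?_
    rw [Complex.mul_im]; ring
  rw [hre, him]
  exact ⟨by linarith, by linarith [hg2]⟩

/-- Let `0 < δ ≤ 1/4`, let `g` be an invertible real `n×n` matrix, let `p` be a
complex matrix with `‖p − I‖ < δ` in operator norm, set `h = g·p` and `B = h·hᵀ`.  Then `B` is
symmetric, the real matrices `3δ·Re B − Im B` and `3δ·Re B + Im B` are positive definite, and
equivalently for every nonzero real `x`: `Re⟨Bx,x⟩ > 0` and `|Im⟨Bx,x⟩| ≤ 3δ·Re⟨Bx,x⟩`. -/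
theorem stmt_7 {n : ℕ} (δ : ℝ) (hδ0 : 0 < δ) (hδ1 : δ ≤ 1 / 4)
    (g : Matrix (Fin n) (Fin n) ℝ) (hg : IsUnit g)
    (p : Matrix (Fin n) (Fin n) ℂ) (hp : ‖p - 1‖ < δ)
    (h B : Matrix (Fin n) (Fin n) ℂ) (hh : h = g.map Complex.ofReal * p) (hB : B = h * hᵀ) :
    Bᵀ = B ∧
    ((3 * δ) • matRe B - matIm B).PosDef ∧ ((3 * δ) • matRe B + matIm B).PosDef ∧
    ∀ x : Fin n → ℝ, x ≠ 0 →
      0 < (B.mulVec (fun j => (x j : ℂ)) ⬝ᵥ fun j => (x j : ℂ)).re ∧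
      |(B.mulVec (fun j => (x j : ℂ)) ⬝ᵥ fun j => (x j : ℂ)).im| ≤
        3 * δ * (B.mulVec (fun j => (x j : ℂ)) ⬝ᵥ fun j => (x j : ℂ)).re := by
  classical
  have hBsym : Bᵀ = B := by
    rw [hB, Matrix.transpose_mul, Matrix.transpose_transpose]
  -- the central estimate
  have key : ∀ x : Fin n → ℝ, x ≠ 0 →
      0 < (B.mulVec (fun j => (x j : ℂ)) ⬝ᵥ fun j => (x j : ℂ)).re ∧
      |(B.mulVec (fun j => (x j : ℂ)) ⬝ᵥ fun j => (x j : ℂ)).im| <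
        3 * δ * (B.mulVec (fun j => (x j : ℂ)) ⬝ᵥ fun j => (x j : ℂ)).re := by
    intro x hx
    set cx : Fin n → ℂ := fun j => (x j : ℂ) with hcx
    set y : Fin n → ℝ := gᵀ *ᵥ x with hy
    have hyne : y ≠ 0 := by
      intro hy0
      apply hx
      have hgT : IsUnit gᵀ := (Matrix.isUnit_transpose g).2 hg
      have hinj := Matrix.mulVec_injective_iff_isUnit.2 hgT
      have : gᵀ *ᵥ x = gᵀ *ᵥ 0 := by rw [Matrix.mulVec_zero, ← hy, hy0]
      exact hinj this
    set cy : Fin n → ℂ := fun k => (y k : ℂ) with hcy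
    -- rewrite the quadratic form
    have hmap : (gᵀ.map Complex.ofReal) *ᵥ cx = cy := by
      funext j
      simp [Matrix.mulVec, dotProduct, Matrix.map_apply, hcy, hy, hcx]
    have hform : B.mulVec cx ⬝ᵥ cx = (pᵀ *ᵥ cy) ⬝ᵥ (pᵀ *ᵥ cy) := by
      have h1 : B.mulVec cx ⬝ᵥ cx = (hᵀ *ᵥ cx) ⬝ᵥ (hᵀ *ᵥ cx) := by
        rw [hB, ← Matrix.mulVec_mulVec, dotProduct_comm, Matrix.dotProduct_mulVec,
          ← Matrix.mulVec_transpose, dotProduct_comm]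
      have h2 : hᵀ *ᵥ cx = pᵀ *ᵥ cy := by
        rw [hh, Matrix.transpose_mul, ← Matrix.transpose_map, ← Matrix.mulVec_mulVec, hmap]
      rw [h1, h2]
    -- the operator norm bound
    have hwb : ∑ j, ‖((pᵀ - 1) *ᵥ cy) j‖^2 < δ^2 * ∑ j, (y j)^2 := by
      have hY2pos : 0 < ∑ j, (y j)^2 := by
        have hex : ∃ j, y j ≠ 0 := by
          by_contra hcon
          push_neg at hcon
          exact hyne (funext hcon)
        obtain ⟨j, hj⟩ := hex
        refine Finset.sum_pos' (fun i _ => sq_nonneg _) ⟨j, Finset.mem_univ j, ?_⟩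
        positivity
      have ht : pᵀ - 1 = (p - 1)ᵀ := by
        rw [Matrix.transpose_sub, Matrix.transpose_one]
      have hb := sum_sq_transpose_mulVec_le (p - 1) cy
      rw [← ht] at hb
      have hcyn : ∑ j, ‖cy j‖^2 = ∑ j, (y j)^2 := by
        refine Finset.sum_congr rfl fun j _ => ?_
        rw [hcy]
        simp [Complex.norm_real, sq_abs]
      rw [hcyn] at hb
      have hlt : ‖p - 1‖^2 * (∑ j, (y j)^2) < δ^2 * ∑ j, (y j)^2 := by
        have : ‖p - 1‖^2 < δ^2 := by nlinarith [norm_nonneg (p - 1)]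
        exact mul_lt_mul_of_pos_right this hY2pos
      exact lt_of_le_of_lt hb hlt
    have := vec_key δ hδ0 (by linarith) pᵀ y hyne hwb
    rw [hform]
    exact this
  -- real/imaginary parts as quadratic forms
  have hreform : ∀ x : Fin n → ℝ,
      (B.mulVec (fun j => (x j : ℂ)) ⬝ᵥ fun j => (x j : ℂ)).re
        = star x ⬝ᵥ ((matRe B) *ᵥ x) := by
    intro x
    simp only [Matrix.mulVec, dotProduct, Complex.re_sum, Complex.mul_re, matRe,
      Matrix.map_apply, Finset.sum_mul, Finset.mul_sum, Complex.ofReal_re, Complex.ofReal_im,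
      star_trivial, Complex.im_sum, mul_zero, sub_zero]
    exact Finset.sum_congr rfl fun i _ => Finset.sum_congr rfl fun j _ => by ring
  have himform : ∀ x : Fin n → ℝ,
      (B.mulVec (fun j => (x j : ℂ)) ⬝ᵥ fun j => (x j : ℂ)).im
        = star x ⬝ᵥ ((matIm B) *ᵥ x) := by
    intro x
    simp only [Matrix.mulVec, dotProduct, Complex.im_sum, Complex.mul_im, matIm,
      Matrix.map_apply, Finset.sum_mul, Finset.mul_sum, Complex.ofReal_re, Complex.ofReal_im,
      star_trivial, mul_zero, zero_mul, add_zero]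
    exact Finset.sum_congr rfl fun i _ => Finset.sum_congr rfl fun j _ => by ring
  -- symmetry of the real and imaginary parts
  have hReSym : (matRe B)ᵀ = matRe B := by
    rw [matRe, ← Matrix.transpose_map, hBsym]
  have hImSym : (matIm B)ᵀ = matIm B := by
    rw [matIm, ← Matrix.transpose_map, hBsym]
  refine ⟨hBsym, Matrix.posDef_iff_dotProduct_mulVec.2 ⟨?_, ?_⟩,
    Matrix.posDef_iff_dotProduct_mulVec.2 ⟨?_, ?_⟩, fun x hx => ⟨(key x hx).1, (key x hx).2.le⟩⟩
  · rw [Matrix.IsHermitian, Matrix.conjTranspose_eq_transpose_of_trivial,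
      Matrix.transpose_sub, Matrix.transpose_smul, hReSym, hImSym]
  · intro x hx
    have h1 := (key x hx).1
    have h2 := (key x hx).2
    have e : star x ⬝ᵥ (((3 * δ) • matRe B - matIm B) *ᵥ x)
        = 3 * δ * (star x ⬝ᵥ ((matRe B) *ᵥ x)) - star x ⬝ᵥ ((matIm B) *ᵥ x) := by
      rw [Matrix.sub_mulVec, dotProduct_sub, Matrix.smul_mulVec,
        dotProduct_smul]
      simp
    rw [e, ← hreform, ← himform]
    cases' abs_lt.1 h2 with hl hr
    linarith
  · rw [Matrix.IsHermitian, Matrix.conjTranspose_eq_transpose_of_trivial,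
      Matrix.transpose_add, Matrix.transpose_smul, hReSym, hImSym]
  · intro x hx
    have h1 := (key x hx).1
    have h2 := (key x hx).2
    have e : star x ⬝ᵥ (((3 * δ) • matRe B + matIm B) *ᵥ x)
        = 3 * δ * (star x ⬝ᵥ ((matRe B) *ᵥ x)) + star x ⬝ᵥ ((matIm B) *ᵥ x) := by
      rw [Matrix.add_mulVec, dotProduct_add, Matrix.smul_mulVec,
        dotProduct_smul]
      simp
    rw [e, ← hreform, ← himform]
    cases' abs_lt.1 h2 with hl hr
    linarith
end

section
/- Let n ≥ 1 and δ > 0 with 2nδ < 1. Let B = B₀ + iB₁ be a complex n×n matrix with B₀ and B₁ real symmetric, and suppose both δB₀ − B₁ and δB₀ + B₁ are positive definite. Then every eigenvalue λ ∈ ℂ of B (i.e. every λ with det(B − λI) = 0) satisfies Re λ > 0 and |Im λ| ≤ (2nδ/√(1 − 4n²δ²))·Re λ. -/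
open scoped Matrix
open Complex

lemma aux_im_form {n : ℕ} (M : Matrix (Fin n) (Fin n) ℝ) (v : Fin n → ℂ) :
    (dotProduct (star v) ((M.map Complex.ofReal).mulVec v))
      = Complex.mk
        (∑ i, ∑ j, M i j * ((v i).re * (v j).re + (v i).im * (v j).im))
        (∑ i, ∑ j, M i j * ((v i).re * (v j).im - (v i).im * (v j).re)) := by
  apply Complex.ext
  · simp only [dotProduct, Matrix.mulVec, Matrix.map_apply, Pi.star_apply,
      Finset.mul_sum, Complex.re_sum]
    refine Finset.sum_congr rfl fun i _ => Finset.sum_congr rfl fun j _ => ?_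
    simp [Complex.mul_re, Complex.mul_im]
    ring
  · simp only [dotProduct, Matrix.mulVec, Matrix.map_apply, Pi.star_apply,
      Finset.mul_sum, Complex.im_sum]
    refine Finset.sum_congr rfl fun i _ => Finset.sum_congr rfl fun j _ => ?_
    simp [Complex.mul_re, Complex.mul_im]
    ring

lemma aux_im_zero {n : ℕ} {M : Matrix (Fin n) (Fin n) ℝ} (hM : M.IsSymm)
    (v : Fin n → ℂ) :
    (dotProduct (star v) ((M.map Complex.ofReal).mulVec v)).im = 0 := by
  rw [aux_im_form]
  show (∑ i, ∑ j, M i j * ((v i).re * (v j).im - (v i).im * (v j).re)) = 0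
  set g : Fin n → Fin n → ℝ :=
    fun i j => M i j * ((v i).re * (v j).im - (v i).im * (v j).re) with hg
  have h2 : (∑ i, ∑ j, g i j) = -∑ i, ∑ j, g i j := by
    calc (∑ i, ∑ j, g i j) = ∑ j, ∑ i, g i j := Finset.sum_comm
    _ = ∑ j, ∑ i, -(g j i) := by
        refine Finset.sum_congr rfl fun j _ => Finset.sum_congr rfl fun i _ => ?_
        simp only [hg]
        rw [hM.apply i j]
        ring
    _ = -∑ j, ∑ i, g j i := by simp
    _ = -∑ i, ∑ j, g i j := rfl
  linarith

lemma aux_re_pos {n : ℕ} {M : Matrix (Fin n) (Fin n) ℝ} (hM : M.PosDef)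
    (v : Fin n → ℂ) (hv : v ≠ 0) :
    0 < (dotProduct (star v) ((M.map Complex.ofReal).mulVec v)).re := by
  rw [aux_im_form]
  show 0 < ∑ i, ∑ j, M i j * ((v i).re * (v j).re + (v i).im * (v j).im)
  set x : Fin n → ℝ := fun i => (v i).re with hx
  set y : Fin n → ℝ := fun i => (v i).im with hy
  have hsplit : ∑ i, ∑ j, M i j * ((v i).re * (v j).re + (v i).im * (v j).im)
      = dotProduct x (M.mulVec x) + dotProduct y (M.mulVec y) := by
    simp only [dotProduct, Matrix.mulVec, Finset.mul_sum, ← Finset.sum_add_distrib]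
    refine Finset.sum_congr rfl fun i _ => Finset.sum_congr rfl fun j _ => ?_
    simp [hx, hy]; ring
  rw [hsplit]
  have hxy : x ≠ 0 ∨ y ≠ 0 := by
    by_contra h
    push_neg at h
    apply hv
    funext i
    have h1 := congrFun h.1 i
    have h2 := congrFun h.2 i
    simp [hx, hy] at h1 h2
    exact Complex.ext h1 h2
  have hpos : ∀ z : Fin n → ℝ, z ≠ 0 → 0 < dotProduct z (M.mulVec z) := by
    intro z hz
    have := hM.re_dotProduct_pos (x := z) hz
    simpa using this
  have hnn : ∀ z : Fin n → ℝ, 0 ≤ dotProduct z (M.mulVec z) := by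
    intro z
    have := hM.posSemidef.re_dotProduct_nonneg (x := z)
    simpa using this
  rcases hxy with h | h
  · have := hpos x h; have := hnn y; linarith
  · have := hpos y h; have := hnn x; linarith

/-- Let `n ≥ 1` and `δ > 0` with `2nδ < 1`.  Let `B = B₀ + iB₁` with `B₀`, `B₁`
real symmetric, and suppose `δB₀ − B₁` and `δB₀ + B₁` are positive definite.  Then every
eigenvalue `λ` of `B` (i.e. `det (B − λI) = 0`) satisfies `Re λ > 0` and
`|Im λ| ≤ (2nδ/√(1 − 4n²δ²))·Re λ`. -/
theorem stmt_8 {n : ℕ} (hn : 1 ≤ n) (δ : ℝ) (hδ0 : 0 < δ) (hδ : 2 * n * δ < 1)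
    (B0 B1 : Matrix (Fin n) (Fin n) ℝ) (hB0 : B0.IsSymm) (hB1 : B1.IsSymm)
    (h1 : (δ • B0 - B1).PosDef) (h2 : (δ • B0 + B1).PosDef)
    (lam : ℂ)
    (hlam : (B0.map Complex.ofReal + Complex.I • B1.map Complex.ofReal - lam • 1).det = 0) :
    0 < lam.re ∧
      |lam.im| ≤ (2 * n * δ / Real.sqrt (1 - 4 * n ^ 2 * δ ^ 2)) * lam.re := by
  -- obtain an eigenvector
  obtain ⟨v, hv0, hveq⟩ := Matrix.exists_mulVec_eq_zero_iff.2 hlam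
  have heig : (B0.map Complex.ofReal).mulVec v + Complex.I • (B1.map Complex.ofReal).mulVec v
      = lam • v := by
    have := hveq
    rw [Matrix.sub_mulVec, Matrix.add_mulVec, Matrix.smul_mulVec,
      Matrix.smul_mulVec, Matrix.one_mulVec, sub_eq_zero] at this
    exact this
  set a : ℂ := dotProduct (star v) ((B0.map Complex.ofReal).mulVec v) with ha
  set b : ℂ := dotProduct (star v) ((B1.map Complex.ofReal).mulVec v) with hb
  set c : ℝ := ∑ i, Complex.normSq (v i) with hc
  have hdot : a + Complex.I * b = lam * (c : ℂ) := by
    have hl := congrArg (dotProduct (star v)) heig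
    rw [dotProduct_add, dotProduct_smul, dotProduct_smul] at hl
    have hcc : dotProduct (star v) v = (c : ℂ) := by
      simp [dotProduct, hc, Complex.normSq_eq_conj_mul_self]
    rw [hcc] at hl
    simpa [smul_eq_mul] using hl
  have haim : a.im = 0 := aux_im_zero hB0 v
  have hbim : b.im = 0 := aux_im_zero hB1 v
  have hcpos : 0 < c := by
    have : ∃ i, v i ≠ 0 := by
      by_contra h; push_neg at h; exact hv0 (funext h)
    obtain ⟨i, hi⟩ := this
    refine Finset.sum_pos' (fun j _ => Complex.normSq_nonneg _) ⟨i, Finset.mem_univ i, ?_⟩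
    exact Complex.normSq_pos.2 hi
  -- real and imaginary parts
  have hre : a.re = lam.re * c := by
    have := congrArg Complex.re hdot
    simpa [Complex.add_re, Complex.mul_re, hbim, haim] using this
  have him : b.re = lam.im * c := by
    have := congrArg Complex.im hdot
    simpa [Complex.add_im, Complex.mul_im, hbim, haim] using this
  -- positivity from PosDef
  have hmap1 : ((δ • B0 - B1).map Complex.ofReal)
      = (δ : ℂ) • B0.map Complex.ofReal - B1.map Complex.ofReal := by
    ext i j; simp [Matrix.map_apply]
  have hmap2 : ((δ • B0 + B1).map Complex.ofReal)
      = (δ : ℂ) • B0.map Complex.ofReal + B1.map Complex.ofReal := by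
    ext i j; simp [Matrix.map_apply]
  have hp1 : 0 < δ * a.re - b.re := by
    have := aux_re_pos h1 v hv0
    rw [hmap1, Matrix.sub_mulVec, Matrix.smul_mulVec, dotProduct_sub,
      dotProduct_smul] at this
    simpa [smul_eq_mul, Complex.sub_re, Complex.mul_re, ha, hb] using this
  have hp2 : 0 < δ * a.re + b.re := by
    have := aux_re_pos h2 v hv0
    rw [hmap2, Matrix.add_mulVec, Matrix.smul_mulVec, dotProduct_add,
      dotProduct_smul] at this
    simpa [smul_eq_mul, Complex.add_re, Complex.mul_re, ha, hb] using this
  have hare : 0 < a.re := by nlinarith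
  have hlre : 0 < lam.re := by nlinarith
  refine ⟨hlre, ?_⟩
  have himle : |lam.im| ≤ δ * lam.re := by
    rw [abs_le]
    constructor <;> nlinarith
  have hn2 : (1:ℝ) ≤ (n:ℝ) := by exact_mod_cast hn
  have h4 : 0 < 1 - 4 * (n:ℝ) ^ 2 * δ ^ 2 := by
    nlinarith [mul_pos (by linarith : (0:ℝ) < 1 - 2 * (n:ℝ) * δ)
      (by positivity : (0:ℝ) < 1 + 2 * (n:ℝ) * δ)]
  have hs0 : 0 < Real.sqrt (1 - 4 * (n:ℝ) ^ 2 * δ ^ 2) := Real.sqrt_pos.2 h4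
  have hs1 : Real.sqrt (1 - 4 * (n:ℝ) ^ 2 * δ ^ 2) ≤ 1 := by
    rw [Real.sqrt_le_one]
    nlinarith [sq_nonneg ((n:ℝ)*δ)]
  have hK : δ ≤ 2 * n * δ / Real.sqrt (1 - 4 * (n:ℝ) ^ 2 * δ ^ 2) := by
    rw [le_div_iff₀ hs0]
    nlinarith
  calc |lam.im| ≤ δ * lam.re := himle
  _ ≤ (2 * n * δ / Real.sqrt (1 - 4 * (n:ℝ) ^ 2 * δ ^ 2)) * lam.re := by
      exact mul_le_mul_of_nonneg_right hK hlre.le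
end

section
/- Let n ≥ 1 and δ > 0 with 2nδ < 1. Let B = B₀ + iB₁ be a complex symmetric n×n matrix with B₀, B₁ real and with both δB₀ − B₁ and δB₀ + B₁ positive definite. Let S be a complex symmetric n×n matrix with S² = B such that every eigenvalue of S has positive real part. Then Re S is positive definite. -/
open scoped Matrix

namespace Stmt11Aux

variable {n : ℕ}

/-- Entrywise coercion of a real matrix to a complex matrix. -/
def rc (A : Matrix (Fin n) (Fin n) ℝ) : Matrix (Fin n) (Fin n) ℂ :=
  A.map (fun x => (x : ℂ))

lemma matRe_mul (M N : Matrix (Fin n) (Fin n) ℂ) :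
    matRe (M * N) = matRe M * matRe N - matIm M * matIm N := by
  ext i j
  simp only [matRe, matIm, Matrix.map_apply, Matrix.sub_apply, Matrix.mul_apply, Complex.re_sum,
    Complex.mul_re, Finset.sum_sub_distrib]

lemma matIm_mul (M N : Matrix (Fin n) (Fin n) ℂ) :
    matIm (M * N) = matRe M * matIm N + matIm M * matRe N := by
  ext i j
  simp only [matRe, matIm, Matrix.map_apply, Matrix.add_apply, Matrix.mul_apply, Complex.im_sum,
    Complex.mul_im, Finset.sum_add_distrib]

lemma dot_sym {Y : Matrix (Fin n) (Fin n) ℝ} (hY : Yᵀ = Y) (x y : Fin n → ℝ) :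
    x ⬝ᵥ (Y *ᵥ y) = y ⬝ᵥ (Y *ᵥ x) := by
  rw [Matrix.dotProduct_mulVec, ← Matrix.mulVec_transpose, hY, dotProduct_comm]

lemma rc_mulVec (A : Matrix (Fin n) (Fin n) ℝ) (x : Fin n → ℝ) :
    rc A *ᵥ (fun j => (x j : ℂ)) = fun j => ((A *ᵥ x) j : ℂ) := by
  funext j
  simp only [rc, Matrix.mulVec, dotProduct, Matrix.map_apply]
  norm_cast

lemma posSemidef_smul {A : Matrix (Fin n) (Fin n) ℝ} (hA : A.PosSemidef) {c : ℝ} (hc : 0 ≤ c) :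
    (c • A).PosSemidef := by
  refine Matrix.PosSemidef.of_dotProduct_mulVec_nonneg ?_ ?_
  · show (c • A)ᴴ = c • A
    rw [Matrix.conjTranspose_smul, hA.1.eq, star_trivial]
  · intro x
    rw [Matrix.smul_mulVec, dotProduct_smul, smul_eq_mul]
    exact mul_nonneg hc (hA.dotProduct_mulVec_nonneg x)

lemma posDef_smul {A : Matrix (Fin n) (Fin n) ℝ} (hA : A.PosDef) {c : ℝ} (hc : 0 < c) :
    (c • A).PosDef := by
  refine Matrix.PosDef.of_dotProduct_mulVec_pos ?_ ?_
  · show (c • A)ᴴ = c • A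
    rw [Matrix.conjTranspose_smul, hA.1.eq, star_trivial]
  · intro x hx
    rw [Matrix.smul_mulVec, dotProduct_smul, smul_eq_mul]
    exact mul_pos hc (hA.dotProduct_mulVec_pos hx)



lemma re_dot_pos {M : Matrix (Fin n) (Fin n) ℂ} (hRe : (matRe M).PosDef)
    (hIm : (matIm M)ᵀ = matIm M) (z : Fin n → ℂ) (hz : z ≠ 0) :
    0 < (star z ⬝ᵥ (M *ᵥ z)).re := by
  classical
  set X := matRe M with hX
  set Y := matIm M with hY
  set u : Fin n → ℝ := fun i => (z i).re with hu
  set v : Fin n → ℝ := fun i => (z i).im with hv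
  have expand : (star z ⬝ᵥ (M *ᵥ z)).re
      = ∑ i, ∑ j, (X i j * (u i * u j + v i * v j) - Y i j * (u i * v j - v i * u j)) := by
    rw [dotProduct, Complex.re_sum]
    refine Finset.sum_congr rfl fun i _ => ?_
    rw [Matrix.mulVec, dotProduct, Finset.mul_sum, Complex.re_sum]
    refine Finset.sum_congr rfl fun j _ => ?_
    simp only [Pi.star_apply, Complex.mul_re, Complex.mul_im, RCLike.star_def,
      Complex.conj_re, Complex.conj_im, hX, hY, matRe, matIm, Matrix.map_apply, hu, hv]
    ring
  have key : (star z ⬝ᵥ (M *ᵥ z)).re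
      = u ⬝ᵥ (X *ᵥ u) + v ⬝ᵥ (X *ᵥ v) - (u ⬝ᵥ (Y *ᵥ v) - v ⬝ᵥ (Y *ᵥ u)) := by
    rw [expand]
    simp only [dotProduct, Matrix.mulVec, Finset.mul_sum, ← Finset.sum_add_distrib,
      ← Finset.sum_sub_distrib]
    refine Finset.sum_congr rfl fun i _ => Finset.sum_congr rfl fun j _ => by ring
  have hcancel : u ⬝ᵥ (Y *ᵥ v) - v ⬝ᵥ (Y *ᵥ u) = 0 := by
    rw [dot_sym hIm u v, sub_self]
  have hXpsd := hRe.posSemidef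
  have huv : u ≠ 0 ∨ v ≠ 0 := by
    by_contra hcon
    push_neg at hcon
    apply hz
    funext i
    have h1 : u i = 0 := by rw [hcon.1]; rfl
    have h2 : v i = 0 := by rw [hcon.2]; rfl
    exact Complex.ext h1 h2
  rw [key, hcancel, sub_zero]
  rcases huv with h | h
  · have h1 : 0 < u ⬝ᵥ (X *ᵥ u) := by
      have := hRe.dotProduct_mulVec_pos h
      rwa [star_trivial] at this
    have h2 : 0 ≤ v ⬝ᵥ (X *ᵥ v) := by
      have := hXpsd.dotProduct_mulVec_nonneg v
      rwa [star_trivial] at this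
    linarith
  · have h1 : 0 < v ⬝ᵥ (X *ᵥ v) := by
      have := hRe.dotProduct_mulVec_pos h
      rwa [star_trivial] at this
    have h2 : 0 ≤ u ⬝ᵥ (X *ᵥ u) := by
      have := hXpsd.dotProduct_mulVec_nonneg u
      rwa [star_trivial] at this
    linarith

lemma re_sq_pos {M : Matrix (Fin n) (Fin n) ℂ}
    (hRe : (matRe (M * M)).PosDef) (hIm : (matIm (M * M))ᵀ = matIm (M * M))
    {μ : ℂ} (h : (M - μ • (1 : Matrix (Fin n) (Fin n) ℂ)).det = 0) : 0 < (μ * μ).re := by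
  classical
  obtain ⟨z, hz, hzeq⟩ := Matrix.exists_mulVec_eq_zero_iff.mpr h
  have heig : M *ᵥ z = μ • z := by
    rwa [Matrix.sub_mulVec, Matrix.smul_mulVec, Matrix.one_mulVec, sub_eq_zero] at hzeq
  have h2 : (M * M) *ᵥ z = (μ * μ) • z := by
    rw [← Matrix.mulVec_mulVec, heig, Matrix.mulVec_smul, heig, smul_smul]
  have hpos := re_dot_pos hRe hIm z hz
  rw [h2, dotProduct_smul, smul_eq_mul] at hpos
  have him : (star z ⬝ᵥ z).im = 0 := by
    rw [dotProduct, Complex.im_sum]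
    apply Finset.sum_eq_zero
    intro i _
    simp only [Pi.star_apply, RCLike.star_def, Complex.mul_im, Complex.conj_re, Complex.conj_im]
    ring
  have hre : 0 < (star z ⬝ᵥ z).re := by
    rw [dotProduct, Complex.re_sum]
    obtain ⟨i, hi⟩ := Function.ne_iff.mp hz
    have hterm : ∀ w : ℂ, ((starRingEnd ℂ w) * w).re = w.re ^ 2 + w.im ^ 2 := by
      intro w
      simp only [Complex.mul_re, Complex.conj_re, Complex.conj_im]
      ring
    refine Finset.sum_pos' (fun j _ => ?_) ⟨i, Finset.mem_univ i, ?_⟩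
    · simp only [Pi.star_apply, RCLike.star_def, hterm]
      positivity
    · simp only [Pi.star_apply, RCLike.star_def, hterm]
      have : (z i).re ≠ 0 ∨ (z i).im ≠ 0 := by
        by_contra hcon
        push_neg at hcon
        exact (by simpa using hi : z i ≠ 0) (Complex.ext hcon.1 (by simpa using hcon.2))
      rcases this with h | h
      · have hp : 0 < (z i).re ^ 2 := by positivity
        nlinarith [sq_nonneg (z i).im]
      · have hp : 0 < (z i).im ^ 2 := by positivity
        nlinarith [sq_nonneg (z i).re]
  rw [Complex.mul_re, him, mul_zero, sub_zero] at hpos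
  rcases mul_pos_iff.mp hpos with ⟨h1, _⟩ | ⟨_, h2⟩
  · exact h1
  · linarith




lemma charpoly_eval (A : Matrix (Fin n) (Fin n) ℂ) (μ : ℂ) :
    A.charpoly.eval μ = (μ • (1 : Matrix (Fin n) (Fin n) ℂ) - A).det := by
  rw [Matrix.charpoly, show (Polynomial.eval μ) = ⇑(Polynomial.evalRingHom μ) from rfl,
    RingHom.map_det]
  congr 1
  ext i j
  by_cases hij : i = j
  · subst hij
    simp [Matrix.charmatrix_apply, Matrix.one_apply, Matrix.smul_apply]
  · simp [Matrix.charmatrix_apply, Matrix.one_apply, hij, Matrix.diagonal_apply_ne _ hij]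

lemma multiset_abs_prod_ge {ε : ℝ} (hε : 0 ≤ ε) (m : Multiset ℂ)
    (h : ∀ x ∈ m, ε ≤ ‖x‖) :
    ε ^ (Multiset.card m) ≤ ‖m.prod‖ := by
  induction m using Multiset.induction_on with
  | empty => simp
  | cons a s ih =>
    rw [Multiset.prod_cons, Multiset.card_cons, norm_mul, pow_succ']
    have ha := h a (Multiset.mem_cons_self a s)
    have hs := ih (fun x hx => h x (Multiset.mem_cons_of_mem hx))
    exact mul_le_mul ha hs (pow_nonneg hε _) (hε.trans ha)

lemma det_lower_bound {A : Matrix (Fin n) (Fin n) ℂ} {ε : ℝ} (hε : 0 ≤ ε)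
    (h : ∀ ν : ℂ, (A - ν • (1 : Matrix (Fin n) (Fin n) ℂ)).det = 0 → ε ≤ ‖ν‖) :
    ε ^ n ≤ ‖A.det‖ := by
  classical
  have hcard : Multiset.card A.charpoly.roots = n := by
    have h1 := Polynomial.Splits.natDegree_eq_card_roots
      (IsAlgClosed.splits A.charpoly)
    rw [← h1, Matrix.charpoly_natDegree_eq_dim, Fintype.card_fin]
  rw [Matrix.det_eq_prod_roots_charpoly]
  have hmain := multiset_abs_prod_ge hε A.charpoly.roots ?_
  · rwa [hcard] at hmain
  intro ν hν
  have hroot : A.charpoly.eval ν = 0 := (Polynomial.mem_roots'.mp hν).2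
  rw [charpoly_eval] at hroot
  apply h ν
  rw [show A - ν • (1 : Matrix (Fin n) (Fin n) ℂ) = -(ν • 1 - A) from (neg_sub _ _).symm,
    Matrix.det_neg, hroot, mul_zero]



end Stmt11Aux


open Stmt11Aux

/-- Let `n ≥ 1` and `δ > 0` with `2nδ < 1`.  Let `B` be a complex symmetric
`n×n` matrix whose real and imaginary parts `B₀`, `B₁` satisfy: `δB₀ − B₁` and `δB₀ + B₁` are
positive definite.  Let `S` be a complex symmetric matrix with `S² = B` all of whose
eigenvalues have positive real part.  Then `Re S` is positive definite. -/
theorem stmt_11 {n : ℕ} (hn : 1 ≤ n) (δ : ℝ) (hδ0 : 0 < δ) (hδ : 2 * n * δ < 1)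
    (B : Matrix (Fin n) (Fin n) ℂ) (hB : Bᵀ = B)
    (h1 : (δ • matRe B - matIm B).PosDef) (h2 : (δ • matRe B + matIm B).PosDef)
    (S : Matrix (Fin n) (Fin n) ℂ) (hS : Sᵀ = S) (hSB : S * S = B)
    (hspec : ∀ μ : ℂ, (S - μ • 1).det = 0 → 0 < μ.re) :
    (matRe S).PosDef := by
  classical
  set H := matRe S with hHdef
  set K := matIm S with hKdef
  have hSsymm : ∀ i j, S j i = S i j := by
    intro i j
    conv_lhs => rw [← hS]
    rw [Matrix.transpose_apply]
  have hHsymm : Hᵀ = H := by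
    ext i j
    show (S j i).re = (S i j).re
    rw [hSsymm]
  have hKsymm : Kᵀ = K := by
    ext i j
    show (S j i).im = (S i j).im
    rw [hSsymm]
  set ST : ℝ → Matrix (Fin n) (Fin n) ℂ :=
    fun t => rc H + ((t : ℂ) * Complex.I) • rc K with hSTdef
  have hSTRe : ∀ t, matRe (ST t) = H := by
    intro t
    ext i j
    show ((rc H + ((t:ℂ) * Complex.I) • rc K) i j).re = H i j
    simp [rc, Matrix.add_apply, Matrix.smul_apply, Matrix.map_apply, Complex.mul_re,
      Complex.mul_im]
  have hSTIm : ∀ t, matIm (ST t) = t • K := by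
    intro t
    ext i j
    show ((rc H + ((t:ℂ) * Complex.I) • rc K) i j).im = (t • K) i j
    simp [rc, Matrix.add_apply, Matrix.smul_apply, Matrix.map_apply, Complex.mul_re,
      Complex.mul_im]
  have hST1 : ST 1 = S := by
    ext i j
    show ((S i j).re : ℂ) + ((1:ℝ):ℂ) * Complex.I * ((S i j).im : ℂ) = S i j
    rw [Complex.ofReal_one, one_mul, mul_comm Complex.I, Complex.re_add_im]
  have hST0 : ST 0 = rc H := by
    ext i j
    show (rc H i j) + ((0:ℝ):ℂ) * Complex.I * rc K i j = rc H i j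
    simp
  have hpr : matRe B = H * H - K * K := by
    rw [hHdef, hKdef, ← hSB]
    exact matRe_mul S S
  have hB0 : (matRe B).PosDef := by
    have hsum := h1.add h2
    have hs2 : (δ • matRe B - matIm B) + (δ • matRe B + matIm B) = (2*δ) • matRe B := by
      module
    rw [hs2] at hsum
    have hre : matRe B = (2*δ)⁻¹ • ((2*δ) • matRe B) := by
      rw [smul_smul, inv_mul_cancel₀ (by positivity), one_smul]
    rw [hre]
    exact posDef_smul hsum (by positivity)
  have hSqRe : ∀ t : ℝ, matRe (ST t * ST t) = matRe B + ((1:ℝ) - t^2) • (K * K) := by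
    intro t
    rw [matRe_mul, hSTRe, hSTIm, hpr, Matrix.smul_mul, Matrix.mul_smul, smul_smul]
    module
  have hSqIm : ∀ t : ℝ, (matIm (ST t * ST t))ᵀ = matIm (ST t * ST t) := by
    intro t
    rw [matIm_mul, hSTRe, hSTIm]
    simp only [Matrix.transpose_add, Matrix.transpose_mul, Matrix.transpose_smul, hHsymm, hKsymm]
    exact add_comm _ _
  have hSqPD : ∀ t ∈ Set.Icc (0:ℝ) 1, (matRe (ST t * ST t)).PosDef := by
    intro t ht
    rw [hSqRe]
    refine hB0.add_posSemidef (posSemidef_smul ?_ ?_)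
    · rw [show K * K = Kᴴ * K from by rw [Matrix.conjTranspose_eq_transpose_of_trivial, hKsymm]]
      exact Matrix.posSemidef_conjTranspose_mul_self K
    · nlinarith [ht.1, ht.2]
  have noImag : ∀ t ∈ Set.Icc (0:ℝ) 1, ∀ μ : ℂ, ((ST t) - μ • 1).det = 0 → μ.re ≠ 0 := by
    intro t ht μ hdet hre0
    have hp := re_sq_pos (hSqPD t ht) (hSqIm t) hdet
    rw [Complex.mul_re, hre0] at hp
    nlinarith [hp, mul_self_nonneg μ.im]
  have hGood1 : ∀ μ : ℂ, ((ST 1) - μ • 1).det = 0 → 0 < μ.re := by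
    rw [hST1]; exact hspec
  set C : ℝ := ∑ i : Fin n, ∑ j : Fin n, (|H i j| + |K i j|) with hCdef
  have eigBound : ∀ t ∈ Set.Icc (0:ℝ) 1, ∀ μ : ℂ, ((ST t) - μ • 1).det = 0 →
      ‖μ‖ ≤ C := by
    intro t ht μ hdet
    obtain ⟨z, hz, hz0⟩ := Matrix.exists_mulVec_eq_zero_iff.mpr hdet
    have heig : (ST t) *ᵥ z = μ • z := by
      rwa [Matrix.sub_mulVec, Matrix.smul_mulVec, Matrix.one_mulVec, sub_eq_zero] at hz0
    obtain ⟨i0, -, hmax⟩ := Finset.exists_max_image Finset.univ (fun i => ‖z i‖)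
      ⟨⟨0, hn⟩, Finset.mem_univ _⟩
    have hz0i : 0 < ‖z i0‖ := by
      obtain ⟨i, hi⟩ := Function.ne_iff.mp hz
      have hi' : z i ≠ 0 := by simpa using hi
      exact lt_of_lt_of_le (by simpa using hi') (hmax i (Finset.mem_univ _))
    have hrow : ‖μ‖ * ‖z i0‖
        ≤ (∑ j, ‖ST t i0 j‖) * ‖z i0‖ := by
      have h1 : (μ • z) i0 = ∑ j, ST t i0 j * z j := by
        rw [← heig]
        rfl
      calc ‖μ‖ * ‖z i0‖ = ‖(μ • z) i0‖ := by
            simp [map_mul]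
        _ = ‖∑ j, ST t i0 j * z j‖ := by rw [h1]
        _ ≤ ∑ j, ‖ST t i0 j * z j‖ := norm_sum_le _ _
        _ ≤ ∑ j, ‖ST t i0 j‖ * ‖z i0‖ := by
            refine Finset.sum_le_sum fun j _ => ?_
            rw [norm_mul]
            exact mul_le_mul_of_nonneg_left (hmax j (Finset.mem_univ _)) (norm_nonneg _)
        _ = (∑ j, ‖ST t i0 j‖) * ‖z i0‖ := (Finset.sum_mul _ _ _).symm
    have hμ : ‖μ‖ ≤ ∑ j, ‖ST t i0 j‖ :=
      le_of_mul_le_mul_right hrow hz0i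
    refine hμ.trans ?_
    have hentry : ∀ j, ‖ST t i0 j‖ ≤ |H i0 j| + |K i0 j| := by
      intro j
      have he : ST t i0 j = (H i0 j : ℂ) + ((t:ℂ) * Complex.I) * (K i0 j : ℂ) := rfl
      rw [he]
      refine (norm_add_le _ _).trans ?_
      have h2' : ‖((t:ℂ) * Complex.I) * (K i0 j : ℂ)‖ = |t| * |K i0 j| := by
        simp [map_mul]
      rw [Complex.norm_real, Real.norm_eq_abs, h2']
      have ht1 : |t| ≤ 1 := by
        rw [abs_le]
        constructor <;> [linarith [ht.1]; exact ht.2]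
      nlinarith [abs_nonneg (K i0 j), abs_nonneg t]
    calc ∑ j, ‖ST t i0 j‖ ≤ ∑ j, (|H i0 j| + |K i0 j|) :=
          Finset.sum_le_sum fun j _ => hentry j
      _ ≤ C := Finset.single_le_sum (f := fun i => ∑ j, (|H i j| + |K i j|))
          (fun i _ => Finset.sum_nonneg fun j _ => by positivity) (Finset.mem_univ i0)
  have hSTcont : Continuous ST :=
    continuous_const.add ((Complex.continuous_ofReal.mul continuous_const).smul continuous_const)
  set G1 : Set ℝ := {t | t ∈ Set.Icc (0:ℝ) 1 ∧ ∀ μ : ℂ, ((ST t) - μ • 1).det = 0 → 0 < μ.re}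
    with hG1def
  set G2 : Set ℝ := {t | t ∈ Set.Icc (0:ℝ) 1 ∧ ¬ (∀ μ : ℂ, ((ST t) - μ • 1).det = 0 → 0 < μ.re)}
    with hG2def
  have hclosed1 : IsClosed G1 := by
    refine IsSeqClosed.isClosed ?_
    intro ts t hts hlim
    have htIcc : t ∈ Set.Icc (0:ℝ) 1 := isClosed_Icc.isSeqClosed (fun k => (hts k).1) hlim
    refine ⟨htIcc, ?_⟩
    intro μ hdet
    rcases lt_or_gt_of_ne (noImag t htIcc μ hdet) with hneg | hpos
    · exfalso
      set ε : ℝ := -μ.re with hεdef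
      have hε0 : 0 < ε := by simp only [hεdef]; linarith
      have hlb : ∀ k, ε ^ n ≤ ‖(μ • 1 - ST (ts k)).det‖ := by
        intro k
        apply det_lower_bound hε0.le
        intro ν hν
        have hmat : (μ • 1 - ST (ts k)) - ν • 1 = -((ST (ts k)) - (μ - ν) • 1) := by
          rw [sub_smul]
          abel
        rw [hmat, Matrix.det_neg, mul_eq_zero] at hν
        have hν' : ((ST (ts k)) - (μ - ν) • 1).det = 0 := by
          rcases hν with h' | h'
          · exact absurd h' (pow_ne_zero _ (by norm_num))
          · exact h'
        have hgood := (hts k).2 (μ - ν) hν'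
        rw [Complex.sub_re] at hgood
        have hν2 : ν.re ≤ -ε := by simp only [hεdef]; linarith
        calc ε ≤ |ν.re| := by
              rw [abs_of_nonpos (by linarith)]
              linarith
          _ ≤ ‖ν‖ := Complex.abs_re_le_norm ν
      have hdc : Continuous fun s : ℝ => ‖(μ • 1 - ST s).det‖ :=
        continuous_norm.comp ((continuous_const.sub hSTcont).matrix_det)
      have hten : Filter.Tendsto (fun k => ‖(μ • 1 - ST (ts k)).det‖)
          Filter.atTop (nhds (‖(μ • 1 - ST t).det‖)) :=
        (hdc.tendsto t).comp hlim
      have hz : (μ • 1 - ST t).det = 0 := by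
        rw [show μ • (1 : Matrix (Fin n) (Fin n) ℂ) - ST t = -((ST t) - μ • 1) from
          (neg_sub _ _).symm, Matrix.det_neg, hdet, mul_zero]
      rw [hz, norm_zero] at hten
      have hle : ε ^ n ≤ 0 := ge_of_tendsto' hten hlb
      exact absurd hle (not_le.mpr (pow_pos hε0 n))
    · exact hpos
  have hclosed2 : IsClosed G2 := by
    refine IsSeqClosed.isClosed ?_
    intro ts t hts hlim
    have htIcc : t ∈ Set.Icc (0:ℝ) 1 := isClosed_Icc.isSeqClosed (fun k => (hts k).1) hlim
    refine ⟨htIcc, ?_⟩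
    have hbad : ∀ k, ∃ μ : ℂ, μ.re ≤ 0 ∧ ((ST (ts k)) - μ • 1).det = 0 := by
      intro k
      have hk := (hts k).2
      push_neg at hk
      obtain ⟨μ, hμ1, hμ2⟩ := hk
      exact ⟨μ, hμ2, hμ1⟩
    choose μs hμre hμdet using hbad
    have hCb : ∀ k, μs k ∈ Metric.closedBall (0:ℂ) C := by
      intro k
      rw [Metric.mem_closedBall, dist_zero_right]
      exact eigBound (ts k) (hts k).1 _ (hμdet k)
    obtain ⟨μ, -, φ, hφ, hμlim⟩ := (isCompact_closedBall (0:ℂ) C).tendsto_subseq hCb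
    intro hGood
    have hcont : Continuous fun p : ℝ × ℂ => ((ST p.1) - p.2 • 1).det :=
      ((hSTcont.comp continuous_fst).sub (continuous_snd.smul continuous_const)).matrix_det
    have hpair : Filter.Tendsto (fun k => (ts (φ k), μs (φ k))) Filter.atTop (nhds (t, μ)) :=
      ((hlim.comp hφ.tendsto_atTop).prodMk_nhds hμlim)
    have h2' := (hcont.tendsto (t, μ)).comp hpair
    have h3 : (fun k => ((ST (ts (φ k))) - (μs (φ k)) • 1).det) = fun _ => (0:ℂ) :=
      funext fun k => hμdet _
    have hdet0 : ((ST t) - μ • 1).det = 0 := by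
      have := tendsto_nhds_unique h2' (h3 ▸ tendsto_const_nhds)
      simpa using this
    have hμre' : μ.re ≤ 0 := by
      have hrelim : Filter.Tendsto (fun k => (μs (φ k)).re) Filter.atTop (nhds μ.re) :=
        (Complex.continuous_re.tendsto μ).comp hμlim
      exact le_of_tendsto hrelim (Filter.Eventually.of_forall fun k => hμre _)
    exact absurd (hGood μ hdet0) (not_lt.mpr hμre')
  have hcover : Set.Icc (0:ℝ) 1 ⊆ G1 ∪ G2 := by
    intro t ht
    by_cases h : ∀ μ : ℂ, ((ST t) - μ • 1).det = 0 → 0 < μ.re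
    · exact Or.inl ⟨ht, h⟩
    · exact Or.inr ⟨ht, h⟩
  have hG2empty : (Set.Icc (0:ℝ) 1 ∩ G2) = ∅ := by
    by_contra hne
    have hne' : (Set.Icc (0:ℝ) 1 ∩ G2).Nonempty := Set.nonempty_iff_ne_empty.mpr hne
    have h1ne : (Set.Icc (0:ℝ) 1 ∩ G1).Nonempty :=
      ⟨1, ⟨by norm_num, by norm_num⟩, ⟨by norm_num, by norm_num⟩, hGood1⟩
    obtain ⟨t, -, ht1, ht2⟩ := isPreconnected_closed_iff.mp isPreconnected_Icc G1 G2
      hclosed1 hclosed2 hcover h1ne hne'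
    exact ht2.2 ht1.2
  have hGood0 : ∀ μ : ℂ, ((ST 0) - μ • 1).det = 0 → 0 < μ.re := by
    have h0 : (0:ℝ) ∈ Set.Icc (0:ℝ) 1 := by norm_num
    rcases hcover h0 with hg | hg
    · exact hg.2
    · exact absurd ⟨h0, hg⟩ (by rw [hG2empty]; simp : (0:ℝ) ∉ Set.Icc (0:ℝ) 1 ∩ G2)
  rw [hST0] at hGood0
  -- now conclude that H is positive definite
  have hHerm : H.IsHermitian := by
    show Hᴴ = H
    rw [Matrix.conjTranspose_eq_transpose_of_trivial, hHsymm]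
  have hgoodR : ∀ (x : Fin n → ℝ) (lam : ℝ), x ≠ 0 → H *ᵥ x = lam • x → 0 < lam := by
    intro x lam hx hlx
    have hz : (fun j => ((x j : ℂ))) ≠ 0 := by
      intro hcon
      apply hx
      funext j
      have := congrFun hcon j
      simpa using this
    have heq : rc H *ᵥ (fun j => ((x j : ℂ))) = (lam : ℂ) • (fun j => ((x j : ℂ))) := by
      rw [rc_mulVec, hlx]
      funext j
      simp
    have hdet : (rc H - (lam : ℂ) • 1).det = 0 := by
      rw [← Matrix.exists_mulVec_eq_zero_iff]
      refine ⟨_, hz, ?_⟩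
      rw [Matrix.sub_mulVec, Matrix.smul_mulVec, Matrix.one_mulVec, heq, sub_self]
    have := hGood0 _ hdet
    simpa using this
  have heigpos : ∀ i, 0 < hHerm.eigenvalues i := by
    intro i
    exact hgoodR _ _ (fun h => hHerm.eigenvectorBasis.orthonormal.ne_zero i (WithLp.ofLp_injective (p := 2) (by simpa using h)))
      (hHerm.mulVec_eigenvectorBasis i)
  have hPSD : H.PosSemidef := hHerm.posSemidef_iff_eigenvalues_nonneg.mpr fun i => (heigpos i).le
  have hdetH : H.det ≠ 0 := by
    intro h0
    obtain ⟨x, hx, hHx⟩ := Matrix.exists_mulVec_eq_zero_iff.mpr h0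
    exact absurd (hgoodR x 0 hx (by rw [hHx, zero_smul])) (lt_irrefl 0)
  refine Matrix.PosDef.of_dotProduct_mulVec_pos hHerm fun x hx => ?_
  rcases (hPSD.dotProduct_mulVec_nonneg x).lt_or_eq with hlt | heq0
  · exact hlt
  · exfalso
    have hker : H *ᵥ x = 0 := (hPSD.dotProduct_mulVec_zero_iff x).mp heq0.symm
    exact hdetH (Matrix.exists_mulVec_eq_zero_iff.mp ⟨x, hx, hker⟩)
end

section
/- Let δ > 0 and let B = B₀ + iB₁ be a complex symmetric n×n matrix with B₀, B₁ real and with both δB₀ − B₁ and δB₀ + B₁ positive definite. Let S = S₀ + iS₁ be a complex symmetric matrix (S₀, S₁ real) with S² = B and S₀ = Re S positive definite. Then: (i) |⟨S₁x,x⟩| ≤ 2nδ·⟨S₀x,x⟩ for every x ∈ ℝ^n; and (ii) there exist U ∈ SO(n,ℝ), a diagonal matrix Λ with positive diagonal entries, and a real n×n matrix K with |K_{ij}| ≤ 2δ for all i,j, such that S = U(I + iK)Λ Uᵀ. -/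
open scoped Matrix

set_option maxHeartbeats 1000000

open Matrix

lemma matRe_mul {n : ℕ} (S T : Matrix (Fin n) (Fin n) ℂ) :
    matRe (S * T) = matRe S * matRe T - matIm S * matIm T := by
  ext i j
  simp [matRe, matIm, Matrix.mul_apply, Complex.re_sum, Complex.mul_re,
    Finset.sum_sub_distrib]

lemma matIm_mul {n : ℕ} (S T : Matrix (Fin n) (Fin n) ℂ) :
    matIm (S * T) = matRe S * matIm T + matIm S * matRe T := by
  ext i j
  simp [matRe, matIm, Matrix.mul_apply, Complex.im_sum, Complex.mul_im,
    Finset.sum_add_distrib]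

lemma matDecomp {n : ℕ} (S : Matrix (Fin n) (Fin n) ℂ) :
    S = (matRe S).map Complex.ofReal + Complex.I • (matIm S).map Complex.ofReal := by
  ext i j
  simp [matRe, matIm, Complex.ext_iff]

lemma conj_form {n : ℕ} (U : Matrix (Fin n) (Fin n) ℝ) (hUl : Uᵀ * U = 1)
    (M : Matrix (Fin n) (Fin n) ℝ) (u : Fin n → ℝ) :
    (U * M * Uᵀ) *ᵥ (U *ᵥ u) ⬝ᵥ (U *ᵥ u) = M *ᵥ u ⬝ᵥ u := by
  rw [Matrix.mulVec_mulVec, Matrix.mul_assoc, Matrix.mul_assoc, hUl, Matrix.mul_one]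
  rw [dotProduct_mulVec, Matrix.vecMul_mulVec, Matrix.transpose_mul,
    Matrix.mul_assoc, hUl, Matrix.mul_one]
  rw [Matrix.vecMul_transpose]

lemma rspec {n : ℕ} (hn : 0 < n) {A : Matrix (Fin n) (Fin n) ℝ} (hA : A.PosDef) :
    ∃ (U : Matrix (Fin n) (Fin n) ℝ) (μ : Fin n → ℝ),
      Uᵀ * U = 1 ∧ U.det = 1 ∧ (∀ j, 0 < μ j) ∧ A = U * diagonal μ * Uᵀ := by
  have hH : A.IsHermitian := hA.isHermitian
  set V : Matrix (Fin n) (Fin n) ℝ := (hH.eigenvectorUnitary : Matrix (Fin n) (Fin n) ℝ) with hV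
  set μ : Fin n → ℝ := hH.eigenvalues with hμ
  have hspec : A = V * diagonal μ * Vᵀ := by
    have := hH.spectral_theorem
    simpa [star_eq_conjTranspose] using this
  have hVl : Vᵀ * V = 1 := by
    have := (Matrix.mem_unitaryGroup_iff'.mp hH.eigenvectorUnitary.2)
    simpa [star_eq_conjTranspose] using this
  have hdet2 : V.det * V.det = 1 := by
    have := congrArg Matrix.det hVl
    simpa [Matrix.det_mul, Matrix.det_transpose, mul_comm] using this
  set i0 : Fin n := ⟨0, hn⟩
  set d : Fin n → ℝ := fun j => if j = i0 then V.det else 1 with hd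
  have hdd : ∀ j, d j * d j = 1 := by
    intro j; by_cases h : j = i0 <;> simp [hd, h, hdet2]
  set U : Matrix (Fin n) (Fin n) ℝ := V * diagonal d with hU
  have hUl : Uᵀ * U = 1 := by
    rw [hU, Matrix.transpose_mul, Matrix.diagonal_transpose]
    calc diagonal d * Vᵀ * (V * diagonal d)
        = diagonal d * (Vᵀ * V) * diagonal d := by
          simp only [Matrix.mul_assoc]
      _ = diagonal d * diagonal d := by rw [hVl, Matrix.mul_one]
      _ = 1 := by rw [Matrix.diagonal_mul_diagonal]; simp [hdd, Matrix.diagonal_one]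
  have hcomm : diagonal d * diagonal μ * diagonal d = diagonal μ := by
    have hfun : (fun j => d j * μ j * d j) = μ := by
      funext j
      by_cases h : j = i0
      · simp only [hd, h, if_pos rfl]; linear_combination μ i0 * hdet2
      · simp [hd, h]
    rw [Matrix.diagonal_mul_diagonal, Matrix.diagonal_mul_diagonal]
    exact congrArg diagonal hfun
  refine ⟨U, μ, hUl, ?_, fun j => hA.eigenvalues_pos j, ?_⟩
  · rw [hU, Matrix.det_mul, Matrix.det_diagonal]
    rw [Finset.prod_ite_eq' Finset.univ i0 (fun _ => V.det)]
    simp [hdet2]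
  · calc A = V * diagonal μ * Vᵀ := hspec
      _ = V * (diagonal d * diagonal μ * diagonal d) * Vᵀ := by rw [hcomm]
      _ = U * diagonal μ * Uᵀ := by
          rw [hU, Matrix.transpose_mul, Matrix.diagonal_transpose]
          simp only [Matrix.mul_assoc]

lemma expand_quad {n : ℕ} (C : Matrix (Fin n) (Fin n) ℝ) (u v : Fin n → ℝ) :
    C *ᵥ (u + v) ⬝ᵥ (u + v)
      = C *ᵥ u ⬝ᵥ u + C *ᵥ u ⬝ᵥ v + C *ᵥ v ⬝ᵥ u + C *ᵥ v ⬝ᵥ v := by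
  simp [Matrix.mulVec_add, add_dotProduct, dotProduct_add]
  ring

lemma expand_quad' {n : ℕ} (C : Matrix (Fin n) (Fin n) ℝ) (u v : Fin n → ℝ) :
    C *ᵥ (u - v) ⬝ᵥ (u - v)
      = C *ᵥ u ⬝ᵥ u - C *ᵥ u ⬝ᵥ v - C *ᵥ v ⬝ᵥ u + C *ᵥ v ⬝ᵥ v := by
  simp [Matrix.mulVec_sub, sub_dotProduct, dotProduct_sub]
  ring

lemma symm_form {n : ℕ} {M : Matrix (Fin n) (Fin n) ℝ} (hM : Mᵀ = M) (u v : Fin n → ℝ) :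
    M *ᵥ u ⬝ᵥ v = M *ᵥ v ⬝ᵥ u := by
  rw [dotProduct_comm, dotProduct_mulVec, ← hM, Matrix.vecMul_transpose, hM]

/-- Let `δ > 0` and let `B` be a complex symmetric `n×n` matrix whose real and
imaginary parts `B₀, B₁` satisfy: `δB₀ − B₁` and `δB₀ + B₁` are positive definite.  Let
`S = S₀ + iS₁` be complex symmetric with `S² = B` and `S₀ = Re S` positive definite.  Then:
(i) `|⟨S₁x,x⟩| ≤ 2nδ·⟨S₀x,x⟩` for every `x ∈ ℝ^n`; and (ii) `S = U(I + iK)Λ Uᵀ` for some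
`U ∈ SO(n,ℝ)`, some diagonal `Λ` with positive diagonal entries, and some real `K` with
`|K_{ij}| ≤ 2δ`. -/
theorem stmt_12 {n : ℕ} (δ : ℝ) (hδ0 : 0 < δ)
    (B : Matrix (Fin n) (Fin n) ℂ) (hB : Bᵀ = B)
    (h1 : (δ • matRe B - matIm B).PosDef) (h2 : (δ • matRe B + matIm B).PosDef)
    (S : Matrix (Fin n) (Fin n) ℂ) (hS : Sᵀ = S) (hSB : S * S = B)
    (hS0 : (matRe S).PosDef) :
    (∀ x : Fin n → ℝ,
      |(matIm S).mulVec x ⬝ᵥ x| ≤ 2 * n * δ * ((matRe S).mulVec x ⬝ᵥ x)) ∧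
    ∃ (U : Matrix (Fin n) (Fin n) ℝ) (lam : Fin n → ℝ) (K : Matrix (Fin n) (Fin n) ℝ),
      Uᵀ * U = 1 ∧ U.det = 1 ∧ (∀ j, 0 < lam j) ∧ (∀ i j, |K i j| ≤ 2 * δ) ∧
      S = U.map Complex.ofReal * (1 + Complex.I • K.map Complex.ofReal) *
          (Matrix.diagonal lam).map Complex.ofReal * (U.map Complex.ofReal)ᵀ := by

  rcases Nat.eq_zero_or_pos n with hn | hn
  · subst hn
    constructor
    · intro x
      simp [dotProduct]
    · exact ⟨1, fun _ => 1, 0, by simp, by simp, fun j => j.elim0, fun i j => i.elim0,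
        by ext i j; exact i.elim0⟩
  have hS1sym : (matIm S)ᵀ = matIm S := by
    unfold matIm; rw [← Matrix.transpose_map, hS]
  have hB0 : matRe B = matRe S * matRe S - matIm S * matIm S := by
    rw [← hSB, matRe_mul]
  have hB1 : matIm B = matRe S * matIm S + matIm S * matRe S := by
    rw [← hSB, matIm_mul]
  obtain ⟨U, μ, hUl, hUdet, hμpos, hS0eq⟩ := rspec hn hS0
  have hUr : U * Uᵀ = 1 := mul_eq_one_comm.mp hUl
  set D : Matrix (Fin n) (Fin n) ℝ := diagonal μ with hD
  set T : Matrix (Fin n) (Fin n) ℝ := Uᵀ * matIm S * U with hT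
  have hS1eq : matIm S = U * T * Uᵀ := by
    rw [hT]
    calc matIm S = (U * Uᵀ) * matIm S * (U * Uᵀ) := by
          rw [hUr, Matrix.one_mul, Matrix.mul_one]
      _ = U * (Uᵀ * matIm S * U) * Uᵀ := by simp only [Matrix.mul_assoc]
  have Tsym : Tᵀ = T := by
    rw [hT]
    simp only [Matrix.transpose_mul, Matrix.transpose_transpose, hS1sym, Matrix.mul_assoc]
  set C0 : Matrix (Fin n) (Fin n) ℝ := D * D - T * T with hC0d
  set C1 : Matrix (Fin n) (Fin n) ℝ := D * T + T * D with hC1d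
  have hmm : ∀ M N : Matrix (Fin n) (Fin n) ℝ, (U*M*Uᵀ) * (U*N*Uᵀ) = U*(M*N)*Uᵀ := by
    intro M N
    calc (U*M*Uᵀ) * (U*N*Uᵀ) = U*(M*((Uᵀ*U)*(N*Uᵀ))) := by simp only [Matrix.mul_assoc]
      _ = U*(M*N)*Uᵀ := by rw [hUl, Matrix.one_mul]; simp only [Matrix.mul_assoc]
  have hB0eq : matRe B = U * C0 * Uᵀ := by
    rw [hB0, hS0eq, hS1eq, hmm, hmm, hC0d, Matrix.mul_sub, Matrix.sub_mul]
  have hB1eq : matIm B = U * C1 * Uᵀ := by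
    rw [hB1, hS0eq, hS1eq, hmm, hmm, hC1d, Matrix.mul_add, Matrix.add_mul]
  have C1sym : C1ᵀ = C1 := by
    rw [hC1d]
    simp [Matrix.transpose_add, Matrix.transpose_mul, Tsym, hD, add_comm]
  -- quadratic form bound
  have key : ∀ u : Fin n → ℝ, |C1 *ᵥ u ⬝ᵥ u| ≤ δ * (C0 *ᵥ u ⬝ᵥ u) := by
    intro u
    have e0 : matRe B *ᵥ (U *ᵥ u) ⬝ᵥ (U *ᵥ u) = C0 *ᵥ u ⬝ᵥ u := by
      rw [hB0eq]; exact conj_form U hUl C0 u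
    have e1 : matIm B *ᵥ (U *ᵥ u) ⬝ᵥ (U *ᵥ u) = C1 *ᵥ u ⬝ᵥ u := by
      rw [hB1eq]; exact conj_form U hUl C1 u
    have p1 := h1.posSemidef.dotProduct_mulVec_nonneg (U *ᵥ u)
    have p2 := h2.posSemidef.dotProduct_mulVec_nonneg (U *ᵥ u)
    simp only [Matrix.sub_mulVec, Matrix.add_mulVec, Matrix.smul_mulVec,
      dotProduct_sub, dotProduct_add, dotProduct_smul,
      smul_eq_mul, star_trivial] at p1 p2
    rw [dotProduct_comm] at e0 e1
    rw [e0, e1] at p1 p2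
    rw [abs_le]; constructor <;> linarith
  -- polarized bound
  have pol : ∀ u v : Fin n → ℝ,
      |C1 *ᵥ u ⬝ᵥ v| ≤ δ / 2 * (C0 *ᵥ u ⬝ᵥ u + C0 *ᵥ v ⬝ᵥ v) := by
    intro u v
    have k1 := abs_le.mp (key (u + v))
    have k2 := abs_le.mp (key (u - v))
    rw [expand_quad, expand_quad] at k1
    rw [expand_quad', expand_quad'] at k2
    rw [symm_form C1sym v u] at k1 k2
    rw [abs_le]; constructor <;> nlinarith [k1.1, k1.2, k2.1, k2.2]
  -- entry identities and bounds
  have hC1entry : ∀ i j, C1 i j = (μ i + μ j) * T i j := by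
    intro i j
    rw [hC1d]
    simp [Matrix.add_apply, hD, Matrix.diagonal_mul, Matrix.mul_diagonal]
    ring
  have hC0diag : ∀ i, C0 i i ≤ μ i * μ i := by
    intro i
    have hTT : (T * T) i i = ∑ k, (T i k)^2 := by
      rw [Matrix.mul_apply]
      refine Finset.sum_congr rfl fun k _ => ?_
      have hk : T k i = T i k := by
        have h := Matrix.transpose_apply T k i
        rw [Tsym] at h; exact h
      rw [hk]; ring
    have hnn : 0 ≤ ∑ k, (T i k)^2 := Finset.sum_nonneg fun k _ => sq_nonneg _
    have hdd : C0 i i = μ i * μ i - ∑ k, (T i k)^2 := by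
      rw [hC0d, Matrix.sub_apply, hTT, Matrix.diagonal_mul_diagonal,
        Matrix.diagonal_apply_eq]
    linarith
  have hC1bound : ∀ i j, |C1 i j| ≤ δ * (μ i * μ j) := by
    intro i j
    have hi := hμpos i; have hj := hμpos j
    set t : ℝ := Real.sqrt (μ j / μ i) with htdef
    have ht : 0 < t := Real.sqrt_pos.mpr (by positivity)
    have ht2 : t * t = μ j / μ i := Real.mul_self_sqrt (by positivity)
    have hti : t⁻¹ * t⁻¹ = μ i / μ j := by
      rw [← mul_inv, ht2, inv_div]
    have hp := pol (t • (Pi.single i 1 : Fin n → ℝ)) (t⁻¹ • (Pi.single j 1 : Fin n → ℝ))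
    simp only [Matrix.mulVec_smul, smul_dotProduct, dotProduct_smul,
      smul_eq_mul, Matrix.mulVec_single_one, Matrix.col_apply, mul_one, dotProduct_single,
      Pi.smul_apply] at hp
    have hji : C1 j i = C1 i j := by
      have h := Matrix.transpose_apply C1 j i
      rw [C1sym] at h; exact h
    rw [hji] at hp
    rw [abs_mul, abs_mul, abs_of_pos ht, abs_of_pos (inv_pos.mpr ht)] at hp
    have htt : t * t⁻¹ = 1 := mul_inv_cancel₀ ht.ne'
    have hb1 : t * (t * C0 i i) ≤ (μ j / μ i) * (μ i * μ i) := by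
      have := hC0diag i
      calc t * (t * C0 i i) = (t * t) * C0 i i := by ring
        _ = (μ j / μ i) * C0 i i := by rw [ht2]
        _ ≤ (μ j / μ i) * (μ i * μ i) := by
            apply mul_le_mul_of_nonneg_left this (by positivity)
    have hb2 : t⁻¹ * (t⁻¹ * C0 j j) ≤ (μ i / μ j) * (μ j * μ j) := by
      have := hC0diag j
      calc t⁻¹ * (t⁻¹ * C0 j j) = (t⁻¹ * t⁻¹) * C0 j j := by ring
        _ = (μ i / μ j) * C0 j j := by rw [hti]
        _ ≤ (μ i / μ j) * (μ j * μ j) := by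
            apply mul_le_mul_of_nonneg_left this (by positivity)
    have heq1 : (μ j / μ i) * (μ i * μ i) = μ j * μ i := by field_simp
    have heq2 : (μ i / μ j) * (μ j * μ j) = μ i * μ j := by field_simp
    calc |C1 i j| = t⁻¹ * (t * |C1 i j|) := by
          rw [← mul_assoc, inv_mul_cancel₀ ht.ne', one_mul]
      _ ≤ δ / 2 * (t * (t * C0 i i) + t⁻¹ * (t⁻¹ * C0 j j)) := hp
      _ ≤ δ / 2 * (μ j * μ i + μ i * μ j) := by
          rw [← heq1, ← heq2]
          have := add_le_add hb1 hb2
          nlinarith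
      _ = δ * (μ i * μ j) := by ring
  have hTb : ∀ i j, |T i j| ≤ δ * μ j := by
    intro i j
    have hi := hμpos i; have hj := hμpos j
    have hsum : 0 < μ i + μ j := by positivity
    have h := hC1bound i j
    rw [hC1entry i j, abs_mul, abs_of_pos hsum] at h
    have hh : (μ i + μ j) * |T i j| ≤ (μ i + μ j) * (δ * μ j) := by
      nlinarith [h, mul_pos (mul_pos hδ0 hj) hj, mul_pos hδ0 (mul_pos hi hj)]
    exact le_of_mul_le_mul_left hh hsum
  have hTb2 : ∀ i j, |T i j| ≤ δ * μ i := by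
    intro i j
    have hTij : |T i j| = |T j i| := by
      have h' : T i j = T j i := by
        have h := Matrix.transpose_apply T i j
        rw [Tsym] at h; exact h
      rw [h']
    rw [hTij]; exact hTb j i
  have hTb' : ∀ i j, |T i j| ≤ δ * (Real.sqrt (μ i) * Real.sqrt (μ j)) := by
    intro i j
    have h1' := hTb2 i j
    have h2' := hTb i j
    have habs : |T i j| ^ 2 ≤ δ ^ 2 * (μ i * μ j) := by
      nlinarith [abs_nonneg (T i j), hμpos i, hμpos j, hδ0]
    have h0 : |T i j| = Real.sqrt (|T i j| ^ 2) := (Real.sqrt_sq (abs_nonneg _)).symm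
    rw [h0]
    refine (Real.sqrt_le_sqrt habs).trans (le_of_eq ?_)
    rw [Real.sqrt_mul (by positivity : (0:ℝ) ≤ δ ^ 2), Real.sqrt_sq hδ0.le,
      Real.sqrt_mul (hμpos i).le]
  have parti : ∀ x : Fin n → ℝ,
      |matIm S *ᵥ x ⬝ᵥ x| ≤ 2 * n * δ * (matRe S *ᵥ x ⬝ᵥ x) := by
    intro x
    set y : Fin n → ℝ := Uᵀ *ᵥ x with hy
    have hx : U *ᵥ y = x := by rw [hy, Matrix.mulVec_mulVec, hUr, Matrix.one_mulVec]
    have eT : matIm S *ᵥ x ⬝ᵥ x = T *ᵥ y ⬝ᵥ y := by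
      conv_lhs => rw [← hx]
      rw [hS1eq]; exact conj_form U hUl T y
    have eD : matRe S *ᵥ x ⬝ᵥ x = D *ᵥ y ⬝ᵥ y := by
      conv_lhs => rw [← hx]
      rw [hS0eq]; exact conj_form U hUl D y
    have eDsum : D *ᵥ y ⬝ᵥ y = ∑ i, μ i * y i ^ 2 := by
      rw [hD]
      simp only [dotProduct, Matrix.mulVec_diagonal]
      exact Finset.sum_congr rfl fun i _ => by ring
    have hDnn : 0 ≤ ∑ i, μ i * y i ^ 2 :=
      Finset.sum_nonneg fun i _ => mul_nonneg (hμpos i).le (sq_nonneg _)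
    rw [eT, eD, eDsum]
    have step1 : |T *ᵥ y ⬝ᵥ y|
        ≤ ∑ i, ∑ j, δ * (Real.sqrt (μ i) * Real.sqrt (μ j)) * (|y i| * |y j|) := by
      calc |T *ᵥ y ⬝ᵥ y| ≤ ∑ i, |(T *ᵥ y) i * y i| := Finset.abs_sum_le_sum_abs _ _
        _ ≤ ∑ i, ∑ j, δ * (Real.sqrt (μ i) * Real.sqrt (μ j)) * (|y i| * |y j|) := by
            refine Finset.sum_le_sum fun i _ => ?_
            rw [abs_mul]
            have hrow : |(T *ᵥ y) i| ≤ ∑ j, δ * (Real.sqrt (μ i) * Real.sqrt (μ j)) * |y j| := by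
              have hdef : (T *ᵥ y) i = ∑ j, T i j * y j := rfl
              rw [hdef]
              refine (Finset.abs_sum_le_sum_abs _ _).trans (Finset.sum_le_sum fun j _ => ?_)
              rw [abs_mul]
              exact mul_le_mul_of_nonneg_right (hTb' i j) (abs_nonneg _)
            calc |(T *ᵥ y) i| * |y i|
                ≤ (∑ j, δ * (Real.sqrt (μ i) * Real.sqrt (μ j)) * |y j|) * |y i| :=
                  mul_le_mul_of_nonneg_right hrow (abs_nonneg _)
              _ = ∑ j, δ * (Real.sqrt (μ i) * Real.sqrt (μ j)) * (|y i| * |y j|) := by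
                  rw [Finset.sum_mul]
                  exact Finset.sum_congr rfl fun j _ => by ring
    have step2 : ∑ i, ∑ j, δ * (Real.sqrt (μ i) * Real.sqrt (μ j)) * (|y i| * |y j|)
        = δ * (∑ i, Real.sqrt (μ i) * |y i|) ^ 2 := by
      rw [sq, Finset.sum_mul_sum, Finset.mul_sum]
      refine Finset.sum_congr rfl fun i _ => ?_
      rw [Finset.mul_sum]
      exact Finset.sum_congr rfl fun j _ => by ring
    have step3 : (∑ i, Real.sqrt (μ i) * |y i|) ^ 2 ≤ n * ∑ i, μ i * y i ^ 2 := by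
      have hcs := sq_sum_le_card_mul_sum_sq (s := (Finset.univ : Finset (Fin n)))
        (f := fun i => Real.sqrt (μ i) * |y i|)
      simp only [Finset.card_univ, Fintype.card_fin] at hcs
      refine hcs.trans (le_of_eq ?_)
      congr 1
      refine Finset.sum_congr rfl fun i _ => ?_
      rw [mul_pow, Real.sq_sqrt (hμpos i).le, sq_abs]
    have hn0 : (0:ℝ) ≤ (n:ℝ) := Nat.cast_nonneg n
    calc |T *ᵥ y ⬝ᵥ y| ≤ δ * (∑ i, Real.sqrt (μ i) * |y i|) ^ 2 := by
          rw [← step2]; exact step1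
      _ ≤ δ * ((n : ℝ) * ∑ i, μ i * y i ^ 2) := by
          exact mul_le_mul_of_nonneg_left step3 hδ0.le
      _ ≤ 2 * n * δ * ∑ i, μ i * y i ^ 2 := by
          nlinarith [mul_nonneg (mul_nonneg hn0 hδ0.le) hDnn]
  set K : Matrix (Fin n) (Fin n) ℝ := Matrix.of fun i j => T i j / μ j with hK
  have hKb : ∀ i j, |K i j| ≤ 2 * δ := by
    intro i j
    have hj := hμpos j
    have hKe : K i j = T i j / μ j := rfl
    rw [hKe, abs_div, abs_of_pos hj, div_le_iff₀ hj]
    calc |T i j| ≤ δ * μ j := hTb i j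
      _ ≤ 2 * δ * μ j := by nlinarith
  have hKD : K * D = T := by
    ext i j
    rw [hD, Matrix.mul_diagonal]
    exact div_mul_cancel₀ _ (hμpos j).ne'
  refine ⟨parti, U, μ, K, hUl, hUdet, hμpos, hKb, ?_⟩
  have mapmul : ∀ A C : Matrix (Fin n) (Fin n) ℝ,
      (A * C).map Complex.ofReal = A.map Complex.ofReal * C.map Complex.ofReal := by
    intro A C
    ext i j
    simp only [Matrix.map_apply, Matrix.mul_apply]
    push_cast
    ring
  set U' := U.map Complex.ofReal with hU'
  set D' := D.map Complex.ofReal with hD'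
  set T' := T.map Complex.ofReal with hT'
  set K' := K.map Complex.ofReal with hK'
  have hUKD : U' * K' * D' = U' * T' := by
    rw [hU', hK', hD', hT', Matrix.mul_assoc, ← mapmul, hKD]
  have expand : U' * (1 + Complex.I • K') * D' * U'ᵀ
      = U' * D' * U'ᵀ + Complex.I • (U' * T' * U'ᵀ) := by
    calc U' * (1 + Complex.I • K') * D' * U'ᵀ
        = (U' * D' + Complex.I • (U' * K' * D')) * U'ᵀ := by
          rw [Matrix.mul_add, Matrix.mul_one, Matrix.mul_smul, Matrix.add_mul,
            Matrix.smul_mul]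
      _ = U' * D' * U'ᵀ + Complex.I • (U' * T' * U'ᵀ) := by
          rw [hUKD, Matrix.add_mul, Matrix.smul_mul]
  conv_lhs => rw [matDecomp S]
  rw [hS0eq, hS1eq, expand, mapmul, mapmul, mapmul, mapmul, Matrix.transpose_map]
end

section
/- Let Λ = diag(λ₁,…,λ_n) be a real diagonal matrix with all λ_j > 0, and let A = (a_{ij}) be a real symmetric n×n matrix such that both Λ² − (ΛA + AΛ) and Λ² + (ΛA + AΛ) are positive definite. Then |a_{ij}| < 2·min(λ_i, λ_j) for all indices i, j. -/
open scoped Matrix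

lemma sum_two' {n : ℕ} {i j : Fin n} (hij : i ≠ j) (f g : Fin n → ℝ) :
    ∑ x, (if x = i then f x else if x = j then g x else 0) = f i + g j := by
  have : ∀ x : Fin n, (if x = i then f x else if x = j then g x else 0)
      = (if x = i then f x else 0) + (if x = j then g x else 0) := by
    intro x
    by_cases h1 : x = i <;> by_cases h2 : x = j <;> simp_all
  simp only [this, Finset.sum_add_distrib, Finset.sum_ite_eq' Finset.univ,
    Finset.mem_univ, if_true]

lemma quad2' {n : ℕ} (M : Matrix (Fin n) (Fin n) ℝ) (i j : Fin n) (hij : i ≠ j) (s t : ℝ) :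
    (fun k => if k = i then s else if k = j then t else 0 : Fin n → ℝ) ⬝ᵥ
      M *ᵥ (fun k => if k = i then s else if k = j then t else 0)
    = s*s*M i i + s*t*M i j + t*s*M j i + t*t*M j j := by
  simp only [dotProduct, Matrix.mulVec, ite_mul, mul_ite, zero_mul, mul_zero]
  rw [sum_two' hij, sum_two' hij, sum_two' hij]
  ring

lemma quad1' {n : ℕ} (M : Matrix (Fin n) (Fin n) ℝ) (i : Fin n) :
    (fun k => if k = i then (1:ℝ) else 0) ⬝ᵥ M *ᵥ (fun k => if k = i then (1:ℝ) else 0)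
    = M i i := by
  simp only [dotProduct, Matrix.mulVec, ite_mul, mul_ite, zero_mul, mul_zero, one_mul,
    mul_one, Finset.sum_ite_eq' Finset.univ, Finset.mem_univ, if_true]

/-- Let `Λ = diag(λ₁,…,λ_n)` with all `λ_j > 0`, and let `A` be a real
symmetric matrix such that `Λ² − (ΛA + AΛ)` and `Λ² + (ΛA + AΛ)` are positive definite.  Then
`|a_{ij}| < 2·min(λ_i, λ_j)` for all `i, j`. -/
theorem stmt_13 {n : ℕ} (lam : Fin n → ℝ) (hlam : ∀ j, 0 < lam j)
    (A : Matrix (Fin n) (Fin n) ℝ) (hA : A.IsSymm)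
    (h1 : (Matrix.diagonal lam * Matrix.diagonal lam -
        (Matrix.diagonal lam * A + A * Matrix.diagonal lam)).PosDef)
    (h2 : (Matrix.diagonal lam * Matrix.diagonal lam +
        (Matrix.diagonal lam * A + A * Matrix.diagonal lam)).PosDef) :
    ∀ i j, |A i j| < 2 * min (lam i) (lam j) := by
  have m1 : ∀ a b, (Matrix.diagonal lam * Matrix.diagonal lam -
      (Matrix.diagonal lam * A + A * Matrix.diagonal lam)) a b
      = (if a = b then lam a * lam a else 0) - (lam a * A a b + A a b * lam b) := by
    intro a b
    simp [Matrix.sub_apply, Matrix.add_apply, Matrix.diagonal_mul, Matrix.mul_diagonal,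
      Matrix.diagonal_mul_diagonal, Matrix.diagonal_apply]
  have m2 : ∀ a b, (Matrix.diagonal lam * Matrix.diagonal lam +
      (Matrix.diagonal lam * A + A * Matrix.diagonal lam)) a b
      = (if a = b then lam a * lam a else 0) + (lam a * A a b + A a b * lam b) := by
    intro a b
    simp [Matrix.add_apply, Matrix.diagonal_mul, Matrix.mul_diagonal,
      Matrix.diagonal_mul_diagonal, Matrix.diagonal_apply]
  intro i j
  have hli := hlam i
  have hlj := hlam j
  by_cases hij : i = j
  · subst hij
    set x : Fin n → ℝ := fun k => if k = i then (1:ℝ) else 0 with hxdef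
    have hx : x ≠ 0 := by
      intro h
      have := congrFun h i
      simp [hxdef] at this
    have q1 : (0:ℝ) < lam i * lam i - (lam i * A i i + A i i * lam i) := by
      have := (Matrix.posDef_iff_dotProduct_mulVec.mp h1).2 hx
      simp only [star_trivial] at this
      rw [quad1'] at this
      rw [m1 i i] at this
      simpa using this
    have q2 : (0:ℝ) < lam i * lam i + (lam i * A i i + A i i * lam i) := by
      have := (Matrix.posDef_iff_dotProduct_mulVec.mp h2).2 hx
      simp only [star_trivial] at this
      rw [quad1'] at this
      rw [m2 i i] at this
      simpa using this
    rw [min_self]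
    rw [abs_lt]
    constructor <;> nlinarith
  · have hAs : A j i = A i j := by
      conv_lhs => rw [← hA]
      simp [Matrix.transpose_apply]
    -- test vectors
    have key : ∀ t : ℝ, t = lam i ∨ t = -lam i →
        (0:ℝ) < lam j * lam j * (lam i * lam i - 2 * lam i * A i i)
          + 2 * lam j * t * (-(lam i + lam j) * A i j)
          + t * t * (lam j * lam j - 2 * lam j * A j j)
        ∧ (0:ℝ) < lam j * lam j * (lam i * lam i + 2 * lam i * A i i)
          + 2 * lam j * t * ((lam i + lam j) * A i j)
          + t * t * (lam j * lam j + 2 * lam j * A j j) := by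
      intro t ht
      set x : Fin n → ℝ := fun k => if k = i then lam j else if k = j then t else 0 with hxdef
      have hx : x ≠ 0 := by
        intro h
        have := congrFun h i
        simp [hxdef, hlj.ne'] at this
      have e1 := (Matrix.posDef_iff_dotProduct_mulVec.mp h1).2 hx
      have e2 := (Matrix.posDef_iff_dotProduct_mulVec.mp h2).2 hx
      simp only [star_trivial] at e1 e2
      rw [hxdef, quad2' _ i j hij] at e1 e2
      rw [m1 i i, m1 i j, m1 j i, m1 j j] at e1
      rw [m2 i i, m2 i j, m2 j i, m2 j j] at e2
      simp only [if_pos rfl, if_neg hij, if_neg (Ne.symm hij), hAs, if_true, ite_true] at e1 e2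
      constructor
      · nlinarith [e1]
      · nlinarith [e2]
    obtain ⟨k1p, k2p⟩ := key (lam i) (Or.inl rfl)
    obtain ⟨k1m, k2m⟩ := key (-lam i) (Or.inr rfl)
    -- summing gives |A i j| * (lam i + lam j) < lam i * lam j
    have hmin : min (lam i) (lam j) * (lam i + lam j) ≥ lam i * lam j := by
      rcases min_cases (lam i) (lam j) with ⟨h, _⟩ | ⟨h, _⟩ <;> rw [h] <;> nlinarith
    rw [abs_lt]
    constructor <;> nlinarith [mul_pos hli hlj, mul_pos (mul_pos hli hlj) (add_pos hli hlj)]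
end

section
/- Let Σ⁺ = {z ∈ Sym(n,ℂ) : Re z is positive definite} and let GL(n,ℝ) act on Σ⁺ by g·z = g z gᵀ. Then this action is proper: the map GL(n,ℝ) × Σ⁺ → Σ⁺ × Σ⁺ given by (g,z) ↦ (g z gᵀ, z) is a proper map, i.e. the preimage of every compact subset of Σ⁺ × Σ⁺ is compact. -/
open scoped Matrix

lemma matRe_conj {n : ℕ} (g : Matrix (Fin n) (Fin n) ℝ) (z : Matrix (Fin n) (Fin n) ℂ) :
    matRe (g.map Complex.ofReal * z * (g.map Complex.ofReal)ᵀ) = g * matRe z * gᵀ := by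
  ext i j
  simp only [matRe, Matrix.map_apply, Matrix.mul_apply, Matrix.transpose_apply,
    Complex.re_sum]
  refine Finset.sum_congr rfl fun k _ => ?_
  simp [Finset.sum_mul, Complex.re_sum, Complex.mul_re]

lemma quadId {n : ℕ} (g P : Matrix (Fin n) (Fin n) ℝ) (v : Fin n → ℝ) :
    v ⬝ᵥ (g * P * gᵀ) *ᵥ v = (gᵀ *ᵥ v) ⬝ᵥ P *ᵥ (gᵀ *ᵥ v) := by
  rw [← Matrix.mulVec_mulVec, ← Matrix.mulVec_mulVec, Matrix.dotProduct_mulVec,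
    ← Matrix.mulVec_transpose]

lemma isUnit_of_conj_posDef {n : ℕ} {g P : Matrix (Fin n) (Fin n) ℝ}
    (hP : (g * P * gᵀ).PosDef) : IsUnit g := by
  rw [Matrix.isUnit_iff_isUnit_det, isUnit_iff_ne_zero]
  intro hdet
  have ht : gᵀ.det = 0 := by rw [Matrix.det_transpose]; exact hdet
  obtain ⟨v, hv, hv0⟩ := (Matrix.exists_mulVec_eq_zero_iff).2 ht
  have h2 := (Matrix.posDef_iff_dotProduct_mulVec.mp hP).2 hv
  rw [show star v = v from rfl, quadId, hv0] at h2
  simp at h2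

lemma singleQuad {n : ℕ} (Q : Matrix (Fin n) (Fin n) ℝ) (i : Fin n) :
    Pi.single i 1 ⬝ᵥ Q *ᵥ Pi.single i 1 = Q i i := by
  rw [Matrix.mulVec_single, single_dotProduct]; simp

lemma diagPos {n : ℕ} {Q : Matrix (Fin n) (Fin n) ℝ} (hQ : Q.PosDef) (i : Fin n) :
    0 < Q i i := by
  have hne : (Pi.single i 1 : Fin n → ℝ) ≠ 0 := by
    intro h
    have := congrFun h i
    simp at this
  have := (Matrix.posDef_iff_dotProduct_mulVec.mp hQ).2 hne
  rwa [show star (Pi.single i 1 : Fin n → ℝ) = Pi.single i 1 from rfl, singleQuad] at this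

lemma sphereCompact (n : ℕ) : IsCompact {v : Fin n → ℝ | v ⬝ᵥ v = 1} := by
  have hcont : Continuous fun v : Fin n → ℝ => v ⬝ᵥ v :=
    continuous_id.dotProduct continuous_id
  have hclosed : IsClosed {v : Fin n → ℝ | v ⬝ᵥ v = 1} :=
    isClosed_eq hcont continuous_const
  have hsub : {v : Fin n → ℝ | v ⬝ᵥ v = 1} ⊆ Set.pi Set.univ fun _ : Fin n => Set.Icc (-1:ℝ) 1 := by
    intro v hv i _
    have h1 : v i * v i ≤ v ⬝ᵥ v := by
      rw [dotProduct]
      exact Finset.single_le_sum (f := fun j => v j * v j)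
        (fun j _ => mul_self_nonneg (v j)) (Finset.mem_univ i)
    rw [hv] at h1
    constructor <;> nlinarith
  exact (isCompact_univ_pi fun _ => isCompact_Icc).of_isClosed_subset hclosed hsub

lemma epsBound {n : ℕ} {PZ : Set (Matrix (Fin n) (Fin n) ℝ)} (hPZ : IsCompact PZ)
    (hpd : ∀ P ∈ PZ, P.PosDef) :
    ∃ ε > 0, ∀ P ∈ PZ, ∀ v : Fin n → ℝ, ε * (v ⬝ᵥ v) ≤ v ⬝ᵥ P *ᵥ v := by
  set Sph := {v : Fin n → ℝ | v ⬝ᵥ v = 1} with hS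
  have hfc : Continuous fun p : Matrix (Fin n) (Fin n) ℝ × (Fin n → ℝ) =>
      p.2 ⬝ᵥ p.1 *ᵥ p.2 :=
    continuous_snd.dotProduct (continuous_fst.matrix_mulVec continuous_snd)
  have key : ∀ ε > 0, (∀ p ∈ PZ ×ˢ Sph, ε ≤ p.2 ⬝ᵥ p.1 *ᵥ p.2) →
      ∀ P ∈ PZ, ∀ v : Fin n → ℝ, ε * (v ⬝ᵥ v) ≤ v ⬝ᵥ P *ᵥ v := by
    intro ε hε hmin P hP v
    rcases eq_or_ne v 0 with rfl | hv
    · simp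
    · have ht : 0 < v ⬝ᵥ v := by
        have hnn : 0 ≤ v ⬝ᵥ v := by
          rw [dotProduct]; exact Finset.sum_nonneg fun i _ => mul_self_nonneg _
        rcases lt_or_eq_of_le hnn with h | h
        · exact h
        · exact absurd (dotProduct_self_eq_zero.mp h.symm) hv
      set c : ℝ := (Real.sqrt (v ⬝ᵥ v))⁻¹ with hc
      have hsq : c ^ 2 = (v ⬝ᵥ v)⁻¹ := by
        rw [hc, ← Real.sqrt_inv, Real.sq_sqrt (by positivity)]
      have hu : (c • v) ∈ Sph := by
        simp only [hS, Set.mem_setOf_eq, smul_dotProduct, dotProduct_smul,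
          smul_eq_mul]
        rw [← mul_assoc, ← sq, hsq]
        exact inv_mul_cancel₀ ht.ne'
      have := hmin (P, c • v) ⟨hP, hu⟩
      simp only [smul_dotProduct, Matrix.mulVec_smul, dotProduct_smul,
        smul_eq_mul] at this
      rw [← mul_assoc, ← sq, hsq] at this
      have h2 : ε * (v ⬝ᵥ v) ≤ (v ⬝ᵥ v)⁻¹ * (v ⬝ᵥ P *ᵥ v) * (v ⬝ᵥ v) :=
        mul_le_mul_of_nonneg_right this ht.le
      rwa [mul_comm ((v ⬝ᵥ v)⁻¹), mul_assoc, inv_mul_cancel₀ ht.ne', mul_one] at h2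
  by_cases hne : (PZ ×ˢ Sph).Nonempty
  · obtain ⟨m, hm, hmin⟩ := (hPZ.prod (sphereCompact n)).exists_isMinOn hne hfc.continuousOn
    have hm2 : m.2 ≠ 0 := by
      intro h
      have h2 : m.2 ⬝ᵥ m.2 = 1 := hm.2
      rw [h] at h2
      simp at h2
    have hε : 0 < m.2 ⬝ᵥ m.1 *ᵥ m.2 := by
      have := (Matrix.posDef_iff_dotProduct_mulVec.mp (hpd m.1 hm.1)).2 hm2
      rwa [show star m.2 = m.2 from rfl] at this
    exact ⟨_, hε, key _ hε fun p hp => hmin hp⟩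
  · exact ⟨1, one_pos, key 1 one_pos fun p hp => absurd ⟨p, hp⟩ hne⟩

/-- Let `Σ⁺ = {z ∈ Sym(n,ℂ) : Re z positive definite}` and let `GL(n,ℝ)` act
on `Σ⁺` by `g·z = g z gᵀ`.  The map `GL(n,ℝ) × Σ⁺ → Σ⁺ × Σ⁺`, `(g,z) ↦ (g z gᵀ, z)` is proper:
the preimage of every compact subset of `Σ⁺ × Σ⁺` is compact. -/
theorem stmt_18 (n : ℕ)
    (F : {g : Matrix (Fin n) (Fin n) ℝ // IsUnit g} ×
          {z : Matrix (Fin n) (Fin n) ℂ // zᵀ = z ∧ (matRe z).PosDef} →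
      Matrix (Fin n) (Fin n) ℂ × Matrix (Fin n) (Fin n) ℂ)
    (hF : ∀ gz, F gz =
      ((gz.1 : Matrix (Fin n) (Fin n) ℝ).map Complex.ofReal * (gz.2 : Matrix (Fin n) (Fin n) ℂ) *
          ((gz.1 : Matrix (Fin n) (Fin n) ℝ).map Complex.ofReal)ᵀ,
        (gz.2 : Matrix (Fin n) (Fin n) ℂ))) :
    ∀ K : Set (Matrix (Fin n) (Fin n) ℂ × Matrix (Fin n) (Fin n) ℂ),
      IsCompact K →
      (∀ q ∈ K, (q.1ᵀ = q.1 ∧ (matRe q.1).PosDef) ∧ (q.2ᵀ = q.2 ∧ (matRe q.2).PosDef)) →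
      IsCompact (F ⁻¹' K) := by
  intro K hK hKmem
  -- the ambient map
  set ψ : Matrix (Fin n) (Fin n) ℝ × Matrix (Fin n) (Fin n) ℂ →
      Matrix (Fin n) (Fin n) ℂ × Matrix (Fin n) (Fin n) ℂ :=
    fun p => (p.1.map Complex.ofReal * p.2 * (p.1.map Complex.ofReal)ᵀ, p.2) with hψdef
  have hψ : Continuous ψ := by
    refine Continuous.prodMk ?_ continuous_snd
    exact ((continuous_fst.matrix_map Complex.continuous_ofReal).matrix_mul
      continuous_snd).matrix_mul
      (continuous_fst.matrix_map Complex.continuous_ofReal).matrix_transpose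
  set S : Set (Matrix (Fin n) (Fin n) ℝ × Matrix (Fin n) (Fin n) ℂ) := ψ ⁻¹' K with hSdef
  -- compactness transfer along the embedding
  have hemb : Topology.IsEmbedding
      (Prod.map (Subtype.val : {g : Matrix (Fin n) (Fin n) ℝ // IsUnit g} → _)
        (Subtype.val : {z : Matrix (Fin n) (Fin n) ℂ // zᵀ = z ∧ (matRe z).PosDef} → _)) :=
    Topology.IsEmbedding.subtypeVal.prodMap Topology.IsEmbedding.subtypeVal
  rw [hemb.isCompact_iff]
  have himg : (Prod.map Subtype.val Subtype.val) '' (F ⁻¹' K) = S := by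
    ext p
    constructor
    · rintro ⟨⟨g, z⟩, hgz, rfl⟩
      have : F (g, z) ∈ K := hgz
      rw [hF] at this
      exact this
    · intro hp
      have hpK : ψ p ∈ K := hp
      obtain ⟨⟨h1s, h1pd⟩, h2⟩ := hKmem _ hpK
      have h1pd' : (p.1 * matRe p.2 * p.1ᵀ).PosDef := by
        rw [← matRe_conj]; exact h1pd
      have hgU : IsUnit p.1 := isUnit_of_conj_posDef h1pd'
      refine ⟨(⟨p.1, hgU⟩, ⟨p.2, h2⟩), ?_, rfl⟩
      show F _ ∈ K
      rw [hF]
      exact hpK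
  rw [himg]
  -- now show S is compact
  have hSclosed : IsClosed S := hK.isClosed.preimage hψ
  -- the set of second coordinates
  have hZ : IsCompact (Prod.snd '' K) := hK.image continuous_snd
  have hmatRe : Continuous (matRe (n := n)) := continuous_id.matrix_map Complex.continuous_re
  have hPZ : IsCompact (matRe '' (Prod.snd '' K)) := hZ.image hmatRe
  have hpd : ∀ P ∈ matRe '' (Prod.snd '' K), P.PosDef := by
    rintro P ⟨z, ⟨q, hq, rfl⟩, rfl⟩
    exact (hKmem q hq).2.2
  obtain ⟨ε, hε, hεb⟩ := epsBound hPZ hpd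
  -- bound on the traces of the first coordinates
  have hQZ : IsCompact (matRe '' (Prod.fst '' K)) :=
    (hK.image continuous_fst).image hmatRe
  have htrace : IsCompact (Matrix.trace '' (matRe '' (Prod.fst '' K))) :=
    hQZ.image (continuous_id.matrix_trace)
  obtain ⟨M, hM⟩ := htrace.bddAbove
  have hMQ : ∀ q ∈ K, ∀ i, matRe q.1 i i ≤ M := by
    intro q hq i
    have hQpd : (matRe q.1).PosDef := (hKmem q hq).1.2
    have h1 : (matRe q.1).trace ≤ M :=
      hM ⟨matRe q.1, ⟨q.1, ⟨q, hq, rfl⟩, rfl⟩, rfl⟩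
    have h2 : matRe q.1 i i ≤ (matRe q.1).trace := by
      rw [Matrix.trace]
      exact Finset.single_le_sum (f := fun j => (matRe q.1).diag j)
        (fun j _ => (diagPos hQpd j).le) (Finset.mem_univ i)
    linarith
  -- entrywise bound on g
  set R : ℝ := Real.sqrt (M / ε) with hR
  have hsub : S ⊆ (Set.pi Set.univ fun _ : Fin n =>
      Set.pi Set.univ fun _ : Fin n => Set.Icc (-R) R) ×ˢ (Prod.snd '' K) := by
    intro p hp
    have hpK : ψ p ∈ K := hp
    constructor
    · intro i _
      intro j _
      -- Q = g P gᵀ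
      have hQmem := hMQ _ hpK i
      have hQ : matRe (ψ p).1 = p.1 * matRe p.2 * p.1ᵀ := matRe_conj p.1 p.2
      rw [hQ] at hQmem
      have hPmem : matRe p.2 ∈ matRe '' (Prod.snd '' K) :=
        ⟨p.2, ⟨ψ p, hpK, rfl⟩, rfl⟩
      -- w is the i-th row of g
      set w : Fin n → ℝ := p.1ᵀ *ᵥ Pi.single i 1 with hw
      have hwj : ∀ k, w k = p.1 i k := by
        intro k
        rw [hw, Matrix.mulVec_single]
        simp
      have hquad : w ⬝ᵥ matRe p.2 *ᵥ w = (p.1 * matRe p.2 * p.1ᵀ) i i := by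
        rw [hw, ← quadId, singleQuad]
      have hlow := hεb _ hPmem w
      rw [hquad] at hlow
      have hsq : p.1 i j * p.1 i j ≤ w ⬝ᵥ w := by
        rw [dotProduct, ← hwj j]
        exact Finset.single_le_sum (f := fun k => w k * w k)
          (fun k _ => mul_self_nonneg (w k)) (Finset.mem_univ j)
      have hchain : ε * (p.1 i j * p.1 i j) ≤ M := by
        have := mul_le_mul_of_nonneg_left hsq hε.le
        linarith
      have hdiv : p.1 i j ^ 2 ≤ M / ε := by
        rw [le_div_iff₀ hε, sq]
        linarith [hchain]
      have habs : |p.1 i j| ≤ R := Real.abs_le_sqrt hdiv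
      rw [abs_le] at habs
      exact ⟨habs.1, habs.2⟩
    · exact ⟨ψ p, hpK, rfl⟩
  have hC : IsCompact ((Set.pi Set.univ fun _ : Fin n =>
      Set.pi Set.univ fun _ : Fin n => Set.Icc (-R) R) :
        Set (Matrix (Fin n) (Fin n) ℝ)) :=
    isCompact_univ_pi fun _ => isCompact_univ_pi fun _ => isCompact_Icc
  exact (hC.prod hZ).of_isClosed_subset hSclosed hsub
end

section
/- Let Λ = diag(λ₁,…,λ_n) be a real diagonal matrix with all λ_j > 0, and let K be a complex n×n matrix with operator norm ‖K‖ < 1. Then for every eigenvalue λ of the matrix Λ^{1/2}(I + iK)Λ^{1/2} (where Λ^{1/2} = diag(√λ₁,…,√λ_n)), there exists an index j with |1 − λ/λ_j| ≤ ‖K‖. In particular, each eigenvalue λ lies in the open sector of the complex plane spanned from the origin by the disc {w : |w − 1| ≤ ‖K‖}. -/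
open scoped Matrix.Norms.L2Operator Matrix

/-- Let `Λ = diag(λ₁,…,λ_n)` with all `λ_j > 0`, and let `K` be a complex
matrix with operator norm `‖K‖ < 1`.  Then every eigenvalue `μ` of `Λ^{1/2}(I + iK)Λ^{1/2}`
satisfies `|1 − μ/λ_j| ≤ ‖K‖` for some index `j`; in particular, `μ` lies in the open sector
spanned from the origin by the disc `{w : |w − 1| ≤ ‖K‖}`. -/
theorem stmt_19 {n : ℕ} (lam : Fin n → ℝ) (hlam : ∀ j, 0 < lam j)
    (K : Matrix (Fin n) (Fin n) ℂ) (hK : ‖K‖ < 1)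
    (M : Matrix (Fin n) (Fin n) ℂ)
    (hM : M = (Matrix.diagonal fun j => (Real.sqrt (lam j) : ℂ)) * (1 + Complex.I • K) *
        (Matrix.diagonal fun j => (Real.sqrt (lam j) : ℂ)))
    (μ : ℂ) (hμ : (M - μ • 1).det = 0) :
    (∃ j, ‖1 - μ / (lam j : ℂ)‖ ≤ ‖K‖) ∧
    ∃ t : ℝ, 0 < t ∧ ‖(t : ℂ) * μ - 1‖ ≤ ‖K‖ := by
  classical
  set sq : Matrix (Fin n) (Fin n) ℂ := Matrix.diagonal fun j => (Real.sqrt (lam j) : ℂ) with hsq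
  set B : Matrix (Fin n) (Fin n) ℂ :=
    (1 + Complex.I • K) - Matrix.diagonal (fun j => μ / (lam j : ℂ)) with hB
  have hsqsq : ∀ j, ((Real.sqrt (lam j) : ℂ)) * ((Real.sqrt (lam j) : ℂ)) = (lam j : ℂ) := by
    intro j
    rw [← Complex.ofReal_mul, Real.mul_self_sqrt (hlam j).le]
  have key : M - μ • 1 = sq * B * sq := by
    have h1 : sq * Matrix.diagonal (fun j => μ / (lam j : ℂ)) * sq = μ • 1 := by
      rw [hsq, Matrix.diagonal_mul_diagonal, Matrix.diagonal_mul_diagonal]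
      have : (fun j => (Real.sqrt (lam j) : ℂ) * (μ / (lam j : ℂ)) * (Real.sqrt (lam j) : ℂ))
          = fun _ => μ := by
        funext j
        have hne : (lam j : ℂ) ≠ 0 := by
          exact_mod_cast (hlam j).ne'
        field_simp
        linear_combination μ * hsqsq j
      rw [this]
      ext i k
      by_cases h : i = k <;>
        simp [Matrix.diagonal_apply, Matrix.one_apply, h]
    rw [hB, Matrix.mul_sub, Matrix.sub_mul, h1, hM]
  have hdetsq : sq.det ≠ 0 := by
    rw [hsq, Matrix.det_diagonal]
    refine Finset.prod_ne_zero_iff.2 fun j _ => ?_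
    exact_mod_cast (Real.sqrt_pos.2 (hlam j)).ne'
  have hdetB : B.det = 0 := by
    have := hμ
    rw [key, Matrix.det_mul, Matrix.det_mul] at this
    rcases mul_eq_zero.1 this with h | h
    · rcases mul_eq_zero.1 h with h | h
      · exact absurd h hdetsq
      · exact h
    · exact absurd h hdetsq
  obtain ⟨v, hv0, hv⟩ := (Matrix.exists_mulVec_eq_zero_iff).2 hdetB
  -- componentwise: (μ/λ_j - 1) * v j = I * (K *ᵥ v) j
  have hcomp : ∀ j, (μ / (lam j : ℂ) - 1) * v j = Complex.I * (K *ᵥ v) j := by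
    intro j
    have := congrFun hv j
    simp [hB, Matrix.sub_mulVec, Matrix.add_mulVec, Matrix.smul_mulVec,
      Matrix.mulVec_diagonal, Matrix.one_mulVec, Pi.sub_apply, Pi.add_apply] at this
    have : v j + Complex.I * (K *ᵥ v) j - μ / (lam j : ℂ) * v j = 0 := by
      linear_combination this
    linear_combination -this
  -- main claim
  have hKnn : 0 ≤ ‖K‖ := norm_nonneg K
  have hmain : ∃ j, ‖1 - μ / (lam j : ℂ)‖ ≤ ‖K‖ := by
    by_contra hcon
    push_neg at hcon
    obtain ⟨j₀, hj₀⟩ := Function.ne_iff.1 hv0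
    -- sums
    have hsum : ∀ j, ‖K‖ ^ 2 * ‖v j‖ ^ 2 ≤ ‖(K *ᵥ v) j‖ ^ 2 := by
      intro j
      have h1 : ‖(μ / (lam j : ℂ) - 1) * v j‖ = ‖(K *ᵥ v) j‖ := by
        rw [hcomp j, norm_mul, Complex.norm_I, one_mul]
      have h2 : ‖K‖ < ‖(μ / (lam j : ℂ) - 1)‖ := by
        have := hcon j
        rwa [norm_sub_rev]
      calc ‖K‖ ^ 2 * ‖v j‖ ^ 2 ≤ ‖(μ / (lam j : ℂ) - 1)‖ ^ 2 * ‖v j‖ ^ 2 := by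
            apply mul_le_mul_of_nonneg_right _ (by positivity)
            exact pow_le_pow_left₀ hKnn h2.le 2
        _ = ‖(K *ᵥ v) j‖ ^ 2 := by rw [← h1, norm_mul, mul_pow]
    have hstrict : ‖K‖ ^ 2 * ‖v j₀‖ ^ 2 < ‖(K *ᵥ v) j₀‖ ^ 2 := by
      have h1 : ‖(μ / (lam j₀ : ℂ) - 1) * v j₀‖ = ‖(K *ᵥ v) j₀‖ := by
        rw [hcomp j₀, norm_mul, Complex.norm_I, one_mul]
      have h2 : ‖K‖ < ‖(μ / (lam j₀ : ℂ) - 1)‖ := by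
        have := hcon j₀
        rwa [norm_sub_rev]
      have hvpos : 0 < ‖v j₀‖ := norm_pos_iff.2 hj₀
      calc ‖K‖ ^ 2 * ‖v j₀‖ ^ 2 < ‖(μ / (lam j₀ : ℂ) - 1)‖ ^ 2 * ‖v j₀‖ ^ 2 := by
            apply mul_lt_mul_of_pos_right _ (by positivity)
            exact pow_lt_pow_left₀ h2 hKnn (by norm_num)
        _ = ‖(K *ᵥ v) j₀‖ ^ 2 := by rw [← h1, norm_mul, mul_pow]
    have hlt : ‖K‖ ^ 2 * ∑ j, ‖v j‖ ^ 2 < ∑ j, ‖(K *ᵥ v) j‖ ^ 2 := by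
      rw [Finset.mul_sum]
      exact Finset.sum_lt_sum (fun j _ => hsum j) ⟨j₀, Finset.mem_univ j₀, hstrict⟩
    -- operator norm bound
    have hop : Real.sqrt (∑ j, ‖(K *ᵥ v) j‖ ^ 2) ≤ ‖K‖ * Real.sqrt (∑ j, ‖v j‖ ^ 2) := by
      have h := K.l2_opNorm_mulVec ((WithLp.equiv 2 (Fin n → ℂ)).symm v)
      rw [EuclideanSpace.norm_eq, EuclideanSpace.norm_eq] at h
      simpa using h
    have hle : ∑ j, ‖(K *ᵥ v) j‖ ^ 2 ≤ ‖K‖ ^ 2 * ∑ j, ‖v j‖ ^ 2 := by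
      have h1 : (0 : ℝ) ≤ ∑ j, ‖(K *ᵥ v) j‖ ^ 2 :=
        Finset.sum_nonneg fun j _ => sq_nonneg _
      have h2 : (0 : ℝ) ≤ ∑ j, ‖v j‖ ^ 2 :=
        Finset.sum_nonneg fun j _ => sq_nonneg _
      have := mul_self_le_mul_self (Real.sqrt_nonneg _) hop
      rw [Real.mul_self_sqrt h1] at this
      calc ∑ j, ‖(K *ᵥ v) j‖ ^ 2 ≤ (‖K‖ * Real.sqrt (∑ j, ‖v j‖ ^ 2)) *
            (‖K‖ * Real.sqrt (∑ j, ‖v j‖ ^ 2)) := this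
        _ = ‖K‖ ^ 2 * ∑ j, ‖v j‖ ^ 2 := by
            rw [mul_mul_mul_comm, Real.mul_self_sqrt h2]
            ring
    exact absurd (lt_of_lt_of_le hlt hle) (lt_irrefl _)
  obtain ⟨j, hj⟩ := hmain
  refine ⟨⟨j, hj⟩, (lam j)⁻¹, inv_pos.2 (hlam j), ?_⟩
  have hne : (lam j : ℂ) ≠ 0 := by exact_mod_cast (hlam j).ne'
  have h2 : ((lam j)⁻¹ : ℂ) * μ - 1 = μ / (lam j : ℂ) - 1 := by
    field_simp
  rw [Complex.ofReal_inv, h2, norm_sub_rev]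
  exact hj
end
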